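/- arXiv:1312.4820 — 10 statements merged into one kernel-verified Lean document; each statement's English description precedes it below -/
import Mathlib

section
/- Let L ≥ 1 be a natural number, let ρ > 0 and J_u > 0 be real numbers, and let γ_1, …, γ_L be arbitrary real numbers. Let A be the (L+2)×(L+2) real matrix whose entries are all zero except A(0,1) = −1/ρ, A(1,0) = −1/J_u and A(ℓ+1,0) = −γ_ℓ for ℓ = 1, …, L. Then the characteristic polynomial of A equals X^L · (X² − 1/(ρ J_u)); in particular, the eigenvalues of A are 0 with algebraic multiplicity L and ±1/√(ρ J_u), each with multiplicity 1, independently of the values γ_1, …, γ_L. -/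
open Polynomial

theorem stmt_0 (L : ℕ) (hL : 1 ≤ L) (ρ Ju : ℝ) (hρ : 0 < ρ) (hJ : 0 < Ju)
    (γ : Fin L → ℝ) (A : Matrix (Fin (L + 2)) (Fin (L + 2)) ℝ)
    (hA : ∀ i j : Fin (L + 2), A i j =
      if (i : ℕ) = 0 ∧ (j : ℕ) = 1 then -1 / ρ
      else if (i : ℕ) = 1 ∧ (j : ℕ) = 0 then -1 / Ju
      else if h : 2 ≤ (i : ℕ) ∧ (j : ℕ) = 0 then
        -γ ⟨(i : ℕ) - 2, by have := i.isLt; omega⟩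
      else 0) :
    A.charpoly = X ^ L * (X ^ 2 - C (1 / (ρ * Ju))) ∧
    A.charpoly.roots =
      Multiset.replicate L (0 : ℝ) +
        {1 / Real.sqrt (ρ * Ju), -(1 / Real.sqrt (ρ * Ju))} := by
  set e : Fin 2 ⊕ Fin L ≃ Fin (L + 2) :=
    finSumFinEquiv.trans (finCongr (by omega)) with hedef
  have he1 : ∀ i : Fin 2, ((e (Sum.inl i) : Fin (L+2)) : ℕ) = (i : ℕ) := by
    intro i; simp [hedef, finCongr]
  have he2 : ∀ j : Fin L, ((e (Sum.inr j) : Fin (L+2)) : ℕ) = 2 + (j : ℕ) := by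
    intro j; simp [hedef, finCongr]; omega
  have hc : ∀ i j : Fin (L+2), Matrix.charmatrix A i j
      = (if i = j then X else 0) - C (A i j) := by
    intro i j
    by_cases h : i = j
    · subst h; simp [Matrix.charmatrix_apply_eq]
    · simp [h, Matrix.charmatrix_apply_ne _ _ _ h, sub_eq_neg_self]
  have key : (Matrix.charmatrix A).submatrix e e =
      Matrix.fromBlocks !![X, C (1/ρ); C (1/Ju), X] 0
        (Matrix.of fun (l : Fin L) (k : Fin 2) => if (k : ℕ) = 0 then C (γ l) else 0)
        (Matrix.diagonal fun _ => X) := by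
    refine Matrix.ext fun i j => ?_
    rcases i with i | i <;> rcases j with j | j <;>
      simp only [Matrix.submatrix_apply, Matrix.fromBlocks_apply₁₁,
        Matrix.fromBlocks_apply₁₂, Matrix.fromBlocks_apply₂₁, Matrix.fromBlocks_apply₂₂,
        hc, hA, Equiv.apply_eq_iff_eq, Matrix.diagonal_apply, Matrix.of_apply]
    · fin_cases i <;> fin_cases j <;>
        simp [he1, Fin.ext_iff, map_div₀] <;> ring_nf <;>
        simp [map_neg, map_div₀]
    · have h1 : ¬ (2 ≤ ((e (Sum.inl i) : Fin (L+2)) : ℕ)) := by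
        rw [he1]; omega
      have h2 : ((e (Sum.inr j) : Fin (L+2)) : ℕ) ≠ 1 := by rw [he2]; omega
      have h3 : ((e (Sum.inr j) : Fin (L+2)) : ℕ) ≠ 0 := by rw [he2]; omega
      simp [h1, h2, h3]
    · have h2 : (2:ℕ) ≤ ((e (Sum.inr i) : Fin (L+2)) : ℕ) := by rw [he2]; omega
      have h4 : ((e (Sum.inr i) : Fin (L+2)) : ℕ) ≠ 0 := by omega
      have h5 : ((e (Sum.inr i) : Fin (L+2)) : ℕ) ≠ 1 := by omega
      have h6 : (⟨((e (Sum.inr i) : Fin (L+2)) : ℕ) - 2, by have := (e (Sum.inr i)).isLt; omega⟩ : Fin L) = i := by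
        ext
        show ((e (Sum.inr i) : Fin (L+2)) : ℕ) - 2 = (i : ℕ)
        have := he2 i; omega
      have h7 : ∀ k : ℕ, 2 + k ≠ 1 := by omega
      fin_cases j <;> simp [he1, he2, h4, h5, h6, h7, Fin.ext_iff]
    · have h4 : ((e (Sum.inr j) : Fin (L+2)) : ℕ) ≠ 0 := by rw [he2]; omega
      have h5 : ((e (Sum.inr j) : Fin (L+2)) : ℕ) ≠ 1 := by rw [he2]; omega
      have h6 : ¬ (2 ≤ ((e (Sum.inr i) : Fin (L+2)) : ℕ) ∧ ((e (Sum.inr j) : Fin (L+2)) : ℕ) = 0) := by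
        rw [he2 j]; omega
      by_cases h : i = j
      · subst h; simp [h4, h5, h6]
      · have : e (Sum.inr i) ≠ e (Sum.inr j) := by
          simp [Equiv.apply_eq_iff_eq, h]
        simp [h, h4, h5, h6]

  have hdet : A.charpoly = X ^ L * (X ^ 2 - C (1 / (ρ * Ju))) := by
    rw [Matrix.charpoly, ← Matrix.det_submatrix_equiv_self e, key,
      Matrix.det_fromBlocks_zero₁₂, Matrix.det_fin_two_of, Matrix.det_diagonal]
    rw [Finset.prod_const, Finset.card_univ, Fintype.card_fin, ← C_mul]
    rw [show (1/ρ) * (1/Ju) = 1/(ρ*Ju) by ring]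
    ring
  have hprod : (0:ℝ) < ρ * Ju := mul_pos hρ hJ
  set s : ℝ := 1 / Real.sqrt (ρ * Ju) with hs
  have hs2 : (1:ℝ) / (ρ * Ju) = s * s := by
    rw [hs, div_mul_div_comm, Real.mul_self_sqrt hprod.le, one_mul]
  have factor : (X:ℝ[X]) ^ 2 - C (1 / (ρ * Ju)) = (X - C s) * (X + C s) := by
    rw [hs2, C_mul]; ring
  refine ⟨hdet, ?_⟩
  rw [hdet, factor]
  have h1 : ((X:ℝ[X]) ^ L) ≠ 0 := pow_ne_zero _ X_ne_zero
  have h2 : ((X:ℝ[X]) - C s) ≠ 0 := X_sub_C_ne_zero s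
  have h3 : ((X:ℝ[X]) + C s) ≠ 0 := by
    rw [show (X:ℝ[X]) + C s = X - C (-s) by simp]; exact X_sub_C_ne_zero _
  rw [Polynomial.roots_mul (mul_ne_zero h1 (mul_ne_zero h2 h3)),
    Polynomial.roots_mul (mul_ne_zero h2 h3), Polynomial.roots_pow, Polynomial.roots_X,
    Polynomial.roots_X_sub_C,
    show (X:ℝ[X]) + C s = X - C (-s) by simp, Polynomial.roots_X_sub_C]
  simp [Multiset.insert_eq_cons]
  rw [Multiset.nsmul_singleton]
end

section
/- Given L ≥ 1, real parameters J_u > 0, η ≠ 0, A ∈ ℝ, 0 < α < 1, pairwise distinct nodes θ_1, …, θ_L > 0 and weights μ_1, …, μ_L ∈ ℝ, set γ_ℓ = (2 sin(πα)/(π J_u)) θ_ℓ^{1−2α} and Υ_ℓ = A Γ(1+α) γ_ℓ, and let S be the (L+2)×(L+2) real matrix whose row 0 and column 0 are zero and whose remaining entries are S(1,1) = −1/(J_u η), S(1,1+ℓ) = −A Γ(1+α) μ_ℓ / J_u, S(1+ℓ,1) = −γ_ℓ/η, and S(1+ℓ,1+j) = −Υ_ℓ μ_j − θ_ℓ² δ_{ℓj}.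 Then for every k ∈ {1, …, L}, det(S − (−θ_k²) I) = −(2 sin(πα) A Γ(1+α)/(π J_u)) · μ_k · θ_k^{5−2α} · ∏_{j ≠ k}(θ_k² − θ_j²). -/
open Matrix in
lemma aux_det_one {n : Type*} [DecidableEq n] [Fintype n] (a b : n → ℝ) (h : b ⬝ᵥ a = 0) :
    ((1 : Matrix n n ℝ) + Matrix.replicateCol Unit a * Matrix.replicateRow Unit b).det = 1 := by
  rw [Matrix.det_one_add_replicateCol_mul_replicateRow, h, add_zero]

lemma aux_mul_left {n : Type*} [DecidableEq n] [Fintype n] (a : n → ℝ) (p : n)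
    (M : Matrix n n ℝ) (i j : n) :
    (((1 : Matrix n n ℝ) + Matrix.replicateCol Unit a * Matrix.replicateRow Unit (fun x => if x = p then (1:ℝ) else 0)) * M) i j
      = M i j + a i * M p j := by
  rw [Matrix.add_mul, Matrix.add_apply, Matrix.one_mul]
  rw [show (Matrix.replicateCol Unit a * Matrix.replicateRow Unit (fun x => if x = p then (1:ℝ) else 0) * M) i j
    = ∑ x, (a i * if x = p then (1:ℝ) else 0) * M x j from by
      simp [Matrix.mul_apply, Matrix.replicateCol, Matrix.replicateRow, Finset.mul_sum]]
  simp [mul_ite, ite_mul, Finset.sum_ite_eq']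

lemma aux_mul_right {n : Type*} [DecidableEq n] [Fintype n] (b : n → ℝ) (p : n)
    (M : Matrix n n ℝ) (i j : n) :
    (M * ((1 : Matrix n n ℝ) + Matrix.replicateCol Unit (fun x => if x = p then (1:ℝ) else 0) * Matrix.replicateRow Unit b)) i j
      = M i j + M i p * b j := by
  rw [Matrix.mul_add, Matrix.add_apply, Matrix.mul_one]
  rw [show (M * (Matrix.replicateCol Unit (fun x => if x = p then (1:ℝ) else 0) * Matrix.replicateRow Unit b)) i j
    = ∑ x, M i x * ((if x = p then (1:ℝ) else 0) * b j) from by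
      simp [Matrix.mul_apply, Matrix.replicateCol, Matrix.replicateRow, Finset.mul_sum]]
  simp [mul_ite, ite_mul, Finset.sum_ite_eq', mul_assoc]

set_option maxHeartbeats 2000000 in
theorem stmt_2 (L : ℕ) (hL : 1 ≤ L) (Ju η A α : ℝ) (hJ : 0 < Ju) (hη : η ≠ 0)
    (hα0 : 0 < α) (hα1 : α < 1)
    (θ μ γ Υ : Fin L → ℝ) (hθ : ∀ ℓ, 0 < θ ℓ) (hdist : Function.Injective θ)
    (hγ : ∀ ℓ, γ ℓ = (2 * Real.sin (Real.pi * α) / (Real.pi * Ju)) * θ ℓ ^ (1 - 2 * α))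
    (hΥ : ∀ ℓ, Υ ℓ = A * Real.Gamma (1 + α) * γ ℓ)
    (S : Matrix (Fin (L + 2)) (Fin (L + 2)) ℝ)
    (hS : ∀ i j : Fin (L + 2), S i j =
      if (i : ℕ) = 0 ∨ (j : ℕ) = 0 then 0
      else if (i : ℕ) = 1 ∧ (j : ℕ) = 1 then -1 / (Ju * η)
      else if h : (i : ℕ) = 1 ∧ 2 ≤ (j : ℕ) then
        -A * Real.Gamma (1 + α) * μ ⟨(j : ℕ) - 2, by have := j.isLt; omega⟩ / Ju
      else if h : 2 ≤ (i : ℕ) ∧ (j : ℕ) = 1 then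
        -γ ⟨(i : ℕ) - 2, by have := i.isLt; omega⟩ / η
      else if h : 2 ≤ (i : ℕ) ∧ 2 ≤ (j : ℕ) then
        -Υ ⟨(i : ℕ) - 2, by have := i.isLt; omega⟩ * μ ⟨(j : ℕ) - 2, by have := j.isLt; omega⟩
          - (θ ⟨(i : ℕ) - 2, by have := i.isLt; omega⟩) ^ 2 * (if i = j then 1 else 0)
      else 0) :
    ∀ k : Fin L, (S - (-(θ k) ^ 2) • (1 : Matrix (Fin (L + 2)) (Fin (L + 2)) ℝ)).det =
      -(2 * Real.sin (Real.pi * α) * A * Real.Gamma (1 + α) / (Real.pi * Ju)) * μ k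
        * θ k ^ (5 - 2 * α) * ∏ j ∈ Finset.univ.erase k, ((θ k) ^ 2 - (θ j) ^ 2) := by
  intro k
  set M : Matrix (Fin (L+2)) (Fin (L+2)) ℝ := S - (-(θ k) ^ 2) • 1 with hMdef
  have hM : ∀ i j, M i j = S i j + (if i = j then θ k ^ 2 else 0) := by
    intro i j
    simp only [hMdef, Matrix.sub_apply, Matrix.smul_apply, Matrix.one_apply, smul_eq_mul, mul_ite,
      mul_one, mul_zero]
    split <;> ring
  have hcases : ∀ i : Fin (L+2), (i:ℕ) = 0 ∨ (i:ℕ) = 1 ∨ ∃ l : Fin L, (i:ℕ) = (l:ℕ) + 2 := by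
    intro i
    by_cases h0 : (i:ℕ) = 0
    · exact Or.inl h0
    by_cases h1 : (i:ℕ) = 1
    · exact Or.inr (Or.inl h1)
    · exact Or.inr (Or.inr ⟨⟨(i:ℕ) - 2, by have := i.isLt; omega⟩, by simp; omega⟩)
  -- entry lemmas
  have hMc0 : ∀ i j : Fin (L+2), (j:ℕ) = 0 → M i j = if i = j then θ k ^ 2 else 0 := by
    intro i j hj
    rw [hM, hS]
    simp [hj]
  have hMr0 : ∀ i j : Fin (L+2), (i:ℕ) = 0 → M i j = if i = j then θ k ^ 2 else 0 := by
    intro i j hi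
    rw [hM, hS]
    simp [hi]
  have hM11 : ∀ i j : Fin (L+2), (i:ℕ) = 1 → (j:ℕ) = 1 → M i j = -1/(Ju*η) + θ k ^ 2 := by
    intro i j hi hj
    have hij : i = j := Fin.ext (by omega)
    rw [hM, hS]
    simp [hi, hj, hij]
  have hM1c : ∀ (m : Fin L) (i j : Fin (L+2)), (i:ℕ) = 1 → (j:ℕ) = (m:ℕ) + 2 →
      M i j = -A * Real.Gamma (1+α) * μ m / Ju := by
    intro m i j hi hj
    have hij : ¬ (i = j) := by rw [Fin.ext_iff]; omega
    rw [hM, hS]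
    have h2 : (⟨(j:ℕ) - 2, by have := j.isLt; omega⟩ : Fin L) = m := by
      simp [Fin.ext_iff, hj]
    simp [hi, hj, hij, h2]
  have hMr1 : ∀ (l : Fin L) (i j : Fin (L+2)), (i:ℕ) = (l:ℕ) + 2 → (j:ℕ) = 1 →
      M i j = -γ l / η := by
    intro l i j hi hj
    have hij : ¬ (i = j) := by rw [Fin.ext_iff]; omega
    rw [hM, hS]
    have h2 : (⟨(i:ℕ) - 2, by have := i.isLt; omega⟩ : Fin L) = l := by
      simp [Fin.ext_iff, hi]
    simp [hi, hj, hij, h2]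
  have hMrc : ∀ (l m : Fin L) (i j : Fin (L+2)), (i:ℕ) = (l:ℕ) + 2 → (j:ℕ) = (m:ℕ) + 2 →
      M i j = -Υ l * μ m + (if l = m then θ k ^ 2 - θ l ^ 2 else 0) := by
    intro l m i j hi hj
    have hij : (i = j) ↔ (l = m) := by
      rw [Fin.ext_iff, Fin.ext_iff]; omega
    rw [hM, hS]
    have h2 : (⟨(i:ℕ) - 2, by have := i.isLt; omega⟩ : Fin L) = l := by
      simp [Fin.ext_iff, hi]
    have h3 : (⟨(j:ℕ) - 2, by have := j.isLt; omega⟩ : Fin L) = m := by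
      simp [Fin.ext_iff, hj]
    have c1 : ¬((i:ℕ) = 0 ∨ (j:ℕ) = 0) := by omega
    have c2 : ¬((i:ℕ) = 1 ∧ (j:ℕ) = 1) := by omega
    have c3 : ¬((i:ℕ) = 1 ∧ 2 ≤ (j:ℕ)) := by omega
    have c4 : ¬(2 ≤ (i:ℕ) ∧ (j:ℕ) = 1) := by omega
    have c5 : (2 ≤ (i:ℕ) ∧ 2 ≤ (j:ℕ)) := by omega
    simp only [if_neg c1, if_neg c2, dif_neg c3, dif_neg c4, dif_pos c5, h2, h3, hij]
    split <;> ring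
  -- positivity facts
  have hπ := Real.pi_pos
  have hsin : 0 < Real.sin (Real.pi * α) :=
    Real.sin_pos_of_pos_of_lt_pi (by positivity) (by nlinarith)
  have hΓpos : 0 < Real.Gamma (1 + α) := Real.Gamma_pos_of_pos (by linarith)
  have hγpos : ∀ l, 0 < γ l := by
    intro l
    rw [hγ]
    exact mul_pos (div_pos (by positivity) (by positivity)) (Real.rpow_pos_of_pos (hθ l) _)
  have hγk : γ k ≠ 0 := (hγpos k).ne'
  set p : Fin (L+2) := ⟨(k:ℕ)+2, by omega⟩ with hpdef
  have hpv : (p:ℕ) = (k:ℕ)+2 := rfl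
  set u : Fin (L+2) → ℝ := fun i =>
    if (i:ℕ) = 1 then -(1/(Ju * γ k))
    else if i = p then 0
    else if _h : 2 ≤ (i:ℕ) then -(γ ⟨(i:ℕ)-2, by have := i.isLt; omega⟩ / γ k) else 0 with hudef
  set d : Fin (L+2) → ℝ := fun i =>
    if (i:ℕ) = 0 ∨ (i:ℕ) = 1 then θ k ^ 2
    else if i = p then -(Υ k * μ k)
    else if _h : 2 ≤ (i:ℕ) then θ k ^ 2 - θ ⟨(i:ℕ)-2, by have := i.isLt; omega⟩ ^ 2 else 0
    with hddef
  set E : Matrix (Fin (L+2)) (Fin (L+2)) ℝ :=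
    1 + Matrix.replicateCol Unit u * Matrix.replicateRow Unit (fun x => if x = p then (1:ℝ) else 0) with hEdef
  have hup : u p = 0 := by simp [hudef, hpv]
  have hdetE : E.det = 1 := aux_det_one _ _ (by
    simp [dotProduct, ite_mul, Finset.sum_ite_eq', hup])
  set N : Matrix (Fin (L+2)) (Fin (L+2)) ℝ := E * M with hNdef
  have hNe : ∀ i j, N i j = M i j + u i * M p j := fun i j => aux_mul_left u p M i j
  have hN : ∀ i j, N i j = if i = p then M p j else (if i = j then d i else 0) := by
    intro i j
    rw [hNe]
    rcases hcases i with hi | hi | ⟨l, hi⟩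
    · -- row 0
      have hip : ¬ i = p := by rw [Fin.ext_iff, hpv]; omega
      have hu : u i = 0 := by
        simp only [hudef]
        rw [if_neg (by omega), if_neg hip, dif_neg (by omega)]
      have hd : d i = θ k ^ 2 := by
        simp only [hddef]; rw [if_pos (by omega)]
      rw [hu, hMr0 i j hi, if_neg hip, hd]
      ring
    · -- row 1
      have hip : ¬ i = p := by rw [Fin.ext_iff, hpv]; omega
      have hu : u i = -(1/(Ju * γ k)) := by simp only [hudef]; rw [if_pos hi]
      rw [hu, if_neg hip]
      rcases hcases j with hj | hj | ⟨m, hj⟩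
      · have hij : ¬ i = j := by rw [Fin.ext_iff]; omega
        rw [hMc0 i j hj, hMc0 p j hj, if_neg hij, if_neg (by rw [Fin.ext_iff, hpv]; omega : ¬ p = j), if_neg hij]
        ring
      · have hij : i = j := Fin.ext (by omega)
        have hd : d i = θ k ^ 2 := by simp only [hddef]; rw [if_pos (by omega)]
        rw [hM11 i j hi hj, hMr1 k p j hpv hj, if_pos hij, hd]
        field_simp
        ring
      · have hij : ¬ i = j := by rw [Fin.ext_iff]; omega
        rw [hM1c m i j hi hj, hMrc k m p j hpv hj, if_neg hij, hΥ k]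
        have hz : (if k = m then θ k ^ 2 - θ k ^ 2 else 0) = 0 := by split <;> ring
        rw [hz]
        field_simp
        ring
    · -- row l+2
      by_cases hlk : l = k
      · have hip : i = p := Fin.ext (by rw [hpv, hi, hlk])
        rw [hip, hup, if_pos rfl]
        ring
      · have hlk' : (l:ℕ) ≠ (k:ℕ) := fun hc => hlk (Fin.ext hc)
        have hip : ¬ i = p := by rw [Fin.ext_iff, hpv]; omega
        have h2 : (⟨(i:ℕ) - 2, by have := i.isLt; omega⟩ : Fin L) = l := by
          simp [Fin.ext_iff, hi]
        have hu : u i = -(γ l / γ k) := by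
          simp only [hudef]
          rw [if_neg (by omega), if_neg hip, dif_pos (by omega)]
          simp only [h2]
        rw [hu, if_neg hip]
        rcases hcases j with hj | hj | ⟨m, hj⟩
        · have hij : ¬ i = j := by rw [Fin.ext_iff]; omega
          rw [hMc0 i j hj, hMc0 p j hj, if_neg hij,
            if_neg (by rw [Fin.ext_iff, hpv]; omega : ¬ p = j), if_neg hij]
          ring
        · have hij : ¬ i = j := by rw [Fin.ext_iff]; omega
          rw [hMr1 l i j hi hj, hMr1 k p j hpv hj, if_neg hij]
          field_simp
          ring
        · have hij : (i = j) ↔ (l = m) := by rw [Fin.ext_iff, Fin.ext_iff]; omega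
          have hd : d i = θ k ^ 2 - θ l ^ 2 := by
            simp only [hddef]
            rw [if_neg (by omega), if_neg hip, dif_pos (by omega)]
            simp only [h2]
          rw [hMrc l m i j hi hj, hMrc k m p j hpv hj, hΥ l, hΥ k]
          have hz : (if k = m then θ k ^ 2 - θ k ^ 2 else 0) = 0 := by split <;> ring
          rw [hz]
          simp only [hij, hd]
          split <;> (field_simp; ring)
  have hMpp : M p p = -(Υ k * μ k) := by
    rw [hMrc k k p p hpv hpv]; simp
  have hNcol : ∀ i, N i p = if i = p then -(Υ k * μ k) else 0 := by
    intro i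
    rw [hN]
    by_cases hip : i = p
    · rw [if_pos hip, if_pos hip, hMpp]
    · rw [if_neg hip, if_neg hip, if_neg hip]
  by_cases hdeg : Υ k * μ k = 0
  · have hdetN : N.det = 0 :=
      Matrix.det_eq_zero_of_column_eq_zero p (fun i => by rw [hNcol]; split <;> simp [hdeg])
    have hdetM : M.det = 0 := by
      rw [hNdef, Matrix.det_mul, hdetE, one_mul] at hdetN
      exact hdetN
    rw [hdetM]
    rcases mul_eq_zero.mp hdeg with h | h
    · have hA : A = 0 := by
        have h' : A * Real.Gamma (1+α) * γ k = 0 := by rw [← hΥ k]; exact h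
        rcases mul_eq_zero.mp h' with h'' | h''
        · rcases mul_eq_zero.mp h'' with h3 | h3
          · exact h3
          · exact absurd h3 hΓpos.ne'
        · exact absurd h'' hγk
      rw [hA]; simp
    · rw [h]; simp
  · -- generic case
    set w : Fin (L+2) → ℝ := fun j => if j = p then 0 else M p j / (Υ k * μ k) with hwdef
    set F : Matrix (Fin (L+2)) (Fin (L+2)) ℝ :=
      1 + Matrix.replicateCol Unit (fun x => if x = p then (1:ℝ) else 0) * Matrix.replicateRow Unit w with hFdef
    have hwp : w p = 0 := by simp [hwdef]
    have hdetF : F.det = 1 := aux_det_one _ _ (by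
      simp [dotProduct, mul_ite, Finset.sum_ite_eq', hwp])
    have hdp : d p = -(Υ k * μ k) := by simp only [hddef]; rw [if_neg (by omega), if_pos trivial]
    have hNF : N * F = Matrix.diagonal d := by
      ext i j
      rw [aux_mul_right w p N i j, hN i j, hNcol i, Matrix.diagonal_apply]
      by_cases hip : i = p
      · subst hip
        rw [if_pos rfl, if_pos rfl]
        by_cases hjp : j = p
        · subst hjp
          rw [hwp, hMpp, if_pos rfl, hdp]
          ring
        · rw [if_neg (fun hc => hjp hc.symm)]
          simp only [hwdef]
          rw [if_neg hjp]
          field_simp [(mul_ne_zero_iff.mp hdeg).1, (mul_ne_zero_iff.mp hdeg).2]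
          ring
      · rw [if_neg hip, if_neg hip]
        ring
    have hdet : M.det = ∏ i, d i := by
      have h1 : (N * F).det = (Matrix.diagonal d).det := by rw [hNF]
      rw [Matrix.det_mul, hNdef, Matrix.det_mul, hdetE, hdetF, one_mul, mul_one,
        Matrix.det_diagonal] at h1
      exact h1
    rw [hdet]
    have hd0 : d (0 : Fin (L+2)) = θ k ^ 2 := by
      simp only [hddef]; rw [if_pos (by simp)]
    have hd1 : d ((0 : Fin (L+1)).succ) = θ k ^ 2 := by
      simp only [hddef]; rw [if_pos (by simp)]
    have hdgen : ∀ (l : Fin L) (i : Fin (L+2)), (i:ℕ) = (l:ℕ)+2 →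
        d i = if l = k then -(Υ k * μ k) else θ k ^ 2 - θ l ^ 2 := by
      intro l i hi
      have h2 : (⟨(i:ℕ) - 2, by have := i.isLt; omega⟩ : Fin L) = l := by
        simp [Fin.ext_iff, hi]
      by_cases hlk : l = k
      · have hip : i = p := Fin.ext (by rw [hi, hpv, hlk])
        simp only [hddef]
        rw [if_neg (by omega), if_pos hip, if_pos hlk]
      · have hip : ¬ i = p := by
          rw [Fin.ext_iff, hpv]
          have : (l:ℕ) ≠ (k:ℕ) := fun hc => hlk (Fin.ext hc)
          omega
        simp only [hddef]
        rw [if_neg (by omega), if_neg hip, dif_pos (by omega), if_neg hlk]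
        simp only [h2]
    have hds : ∀ i : Fin L, d (i.succ.succ) =
        if i = k then -(Υ k * μ k) else θ k ^ 2 - θ i ^ 2 := fun i =>
      hdgen i _ (by simp only [Fin.val_succ])
    rw [Fin.prod_univ_succ, Fin.prod_univ_succ, hd0, hd1]
    simp only [hds]
    rw [← Finset.mul_prod_erase Finset.univ _ (Finset.mem_univ k), if_pos rfl,
      Finset.prod_congr rfl (fun j hj => if_neg (Finset.ne_of_mem_erase hj))]
    have hpow : θ k ^ ((5:ℝ) - 2*α) = θ k ^ 2 * θ k ^ 2 * θ k ^ ((1:ℝ) - 2*α) := by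
      rw [show (5:ℝ) - 2*α = ((4:ℕ):ℝ) + (1 - 2*α) by push_cast; ring,
        Real.rpow_add (hθ k), Real.rpow_natCast]
      ring
    rw [hΥ k, hγ k, hpow]
    field_simp
end

section
/- Let J_u > 0, γ > 0 and θ > 0 be real numbers, and let σ, φ : ℝ → ℝ be differentiable functions satisfying φ'(t) = −θ² φ(t) + J_u γ σ'(t) for all t ∈ ℝ. Then for every t ∈ ℝ, φ(t) σ(t) = φ(t)²/(J_u γ) + (γ/(2θ²)) · d/dt [ ( √J_u · σ(t) − φ(t)/(√J_u · γ) )² ]. -/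
theorem stmt_5 (Ju γ θ : ℝ) (hJ : 0 < Ju) (hγ : 0 < γ) (hθ : 0 < θ)
    (σ φ : ℝ → ℝ) (hσ : Differentiable ℝ σ) (hφ : Differentiable ℝ φ)
    (hode : ∀ t : ℝ, deriv φ t = -θ ^ 2 * φ t + Ju * γ * deriv σ t) :
    ∀ t : ℝ, φ t * σ t =
      (φ t) ^ 2 / (Ju * γ) + (γ / (2 * θ ^ 2)) *
        deriv (fun s => (Real.sqrt Ju * σ s - φ s / (Real.sqrt Ju * γ)) ^ 2) t := by
  intro t
  have hs : 0 < Real.sqrt Ju := Real.sqrt_pos.mpr hJ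
  have hsq : Real.sqrt Ju ^ 2 = Ju := Real.sq_sqrt hJ.le
  have hu : HasDerivAt (fun s => Real.sqrt Ju * σ s - φ s / (Real.sqrt Ju * γ))
      (Real.sqrt Ju * deriv σ t - deriv φ t / (Real.sqrt Ju * γ)) t := by
    exact (((hσ t).hasDerivAt.const_mul _).sub
      (((hφ t).hasDerivAt.div_const _)))
  have hd : deriv (fun s => (Real.sqrt Ju * σ s - φ s / (Real.sqrt Ju * γ)) ^ 2) t
      = 2 * (Real.sqrt Ju * σ t - φ t / (Real.sqrt Ju * γ)) *
        (Real.sqrt Ju * deriv σ t - deriv φ t / (Real.sqrt Ju * γ)) := by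
    have := (hu.fun_pow 2).deriv
    simpa [mul_comm, mul_assoc, mul_left_comm] using this
  rw [hd, hode t]
  have hθ2 : (θ : ℝ) ^ 2 ≠ 0 := pow_ne_zero 2 hθ.ne'
  field_simp
  ring_nf
  have h4 : Real.sqrt Ju ^ 4 = Ju ^ 2 := by
    rw [show (4:ℕ) = 2 * 2 from rfl, pow_mul, hsq]
  rw [h4, hsq]
  ring
end

section
/- Let ρ, J_u, η, A > 0, 0 < α < 1, L ≥ 1, θ_ℓ > 0 and μ_ℓ > 0 for ℓ = 1, …, L; set γ_ℓ = (2 sin(πα)/(π J_u)) θ_ℓ^{1−2α} and Υ_ℓ = A Γ(1+α) γ_ℓ. Suppose v, σ, φ_1, …, φ_L : ℝ × ℝ → ℝ are continuously differentiable, compactly supported in the space variable x uniformly for t in compact intervals, and satisfy for all (x,t): ∂v/∂t = (1/ρ) ∂σ/∂x; ∂σ/∂t = (1/J_u) ∂v/∂x − σ/(J_u η) − (A Γ(1+α)/J_u) ∑_{j=1}^L μ_j φ_j; and ∂φ_ℓ/∂t = γ_ℓ ∂v/∂x − θ_ℓ² φ_ℓ − (γ_ℓ/η) σ − Υ_ℓ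 ∑_{j=1}^L μ_j φ_j for each ℓ. Define the energy E(t) = ½ ∫_ℝ [ ρ v² + J_u σ² + ∑_{ℓ=1}^L (μ_ℓ Υ_ℓ/θ_ℓ²) ( √J_u σ − φ_ℓ/(√J_u γ_ℓ) )² ] dx. Then E is differentiable and E'(t) = − ∫_ℝ [ σ²/η + ∑_{ℓ=1}^L μ_ℓ Υ_ℓ ( φ_ℓ/(√J_u γ_ℓ) )² ] dx ≤ 0 for all t. -/
open MeasureTheory

private lemma aux_time (f : ℝ → ℝ → ℝ) (hf : ContDiff ℝ 1 (Function.uncurry f)) (x t : ℝ) :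
    HasDerivAt (fun s => f x s) (fderiv ℝ (Function.uncurry f) (x, t) (0, 1)) t := by
  have h1 : HasFDerivAt (Function.uncurry f) (fderiv ℝ (Function.uncurry f) (x, t)) (x, t) :=
    (hf.differentiable one_ne_zero (x, t)).hasFDerivAt
  have h2 : HasDerivAt (fun s : ℝ => ((x, s) : ℝ × ℝ)) ((0 : ℝ), (1 : ℝ)) t := by
    simpa using (hasDerivAt_const t x).prodMk (hasDerivAt_id t)
  exact h1.comp_hasDerivAt t h2

private lemma aux_space (f : ℝ → ℝ → ℝ) (hf : ContDiff ℝ 1 (Function.uncurry f)) (x t : ℝ) :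
    HasDerivAt (fun y => f y t) (fderiv ℝ (Function.uncurry f) (x, t) (1, 0)) x := by
  have h1 : HasFDerivAt (Function.uncurry f) (fderiv ℝ (Function.uncurry f) (x, t)) (x, t) :=
    (hf.differentiable one_ne_zero (x, t)).hasFDerivAt
  have h2 : HasDerivAt (fun y : ℝ => ((y, t) : ℝ × ℝ)) ((1 : ℝ), (0 : ℝ)) x := by
    simpa using (hasDerivAt_id x).prodMk (hasDerivAt_const x t)
  exact h1.comp_hasDerivAt x h2

private lemma aux_pointwise (ρ Ju η A α : ℝ) (hρ : ρ ≠ 0) (hJ : 0 < Ju) (hη : η ≠ 0)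
    (L : ℕ) (θ μ γ Υ : Fin L → ℝ) (hθ0 : ∀ ℓ, θ ℓ ≠ 0) (hγ0 : ∀ ℓ, γ ℓ ≠ 0)
    (hΥ : ∀ ℓ, Υ ℓ = A * Real.Gamma (1 + α) * γ ℓ)
    (v σ : ℝ → ℝ → ℝ) (φ : Fin L → ℝ → ℝ → ℝ)
    (hv : ContDiff ℝ 1 (Function.uncurry v)) (hσ : ContDiff ℝ 1 (Function.uncurry σ))
    (hφ : ∀ ℓ, ContDiff ℝ 1 (Function.uncurry (φ ℓ)))
    (heq1 : ∀ x t : ℝ, deriv (fun s => v x s) t = (1 / ρ) * deriv (fun y => σ y t) x)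
    (heq2 : ∀ x t : ℝ, deriv (fun s => σ x s) t =
      (1 / Ju) * deriv (fun y => v y t) x - σ x t / (Ju * η)
        - (A * Real.Gamma (1 + α) / Ju) * ∑ j : Fin L, μ j * φ j x t)
    (heq3 : ∀ (ℓ : Fin L) (x t : ℝ), deriv (fun s => φ ℓ x s) t =
      γ ℓ * deriv (fun y => v y t) x - θ ℓ ^ 2 * φ ℓ x t - (γ ℓ / η) * σ x t
        - Υ ℓ * ∑ j : Fin L, μ j * φ j x t)
    (x t : ℝ) :
    HasDerivAt (fun s => ρ * v x s ^ 2 + Ju * σ x s ^ 2 +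
        ∑ ℓ : Fin L, (μ ℓ * Υ ℓ / θ ℓ ^ 2) *
          (Real.sqrt Ju * σ x s - φ ℓ x s / (Real.sqrt Ju * γ ℓ)) ^ 2)
      (2 * (fderiv ℝ (Function.uncurry v) (x, t) (1, 0) * σ x t
          + v x t * fderiv ℝ (Function.uncurry σ) (x, t) (1, 0))
        - 2 * (σ x t ^ 2 / η +
          ∑ ℓ : Fin L, μ ℓ * Υ ℓ * (φ ℓ x t / (Real.sqrt Ju * γ ℓ)) ^ 2)) t := by
  have hJne : Ju ≠ 0 := hJ.ne'
  have hsqrt : Real.sqrt Ju ≠ 0 := (Real.sqrt_pos.2 hJ).ne'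
  have hJu2 : Real.sqrt Ju ^ 2 = Ju := Real.sq_sqrt hJ.le
  set vX : ℝ := fderiv ℝ (Function.uncurry v) (x, t) (1, 0) with hvX
  set sX : ℝ := fderiv ℝ (Function.uncurry σ) (x, t) (1, 0) with hsX
  set S : ℝ := ∑ j : Fin L, μ j * φ j x t with hS
  set T1 : ℝ := ∑ j : Fin L, μ j * Υ j * (φ j x t / (Real.sqrt Ju * γ j)) with hT1
  set T2 : ℝ := ∑ j : Fin L, μ j * Υ j * (φ j x t / (Real.sqrt Ju * γ j)) ^ 2 with hT2
  have hvT : HasDerivAt (fun s => v x s) ((1 / ρ) * sX) t := by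
    have h0 : deriv (fun s => v x s) t = (1 / ρ) * sX := by
      rw [heq1 x t, (aux_space σ hσ x t).deriv, hsX]
    exact h0 ▸ (aux_time v hv x t).differentiableAt.hasDerivAt
  have hσT : HasDerivAt (fun s => σ x s)
      ((1 / Ju) * vX - σ x t / (Ju * η) - (A * Real.Gamma (1 + α) / Ju) * S) t := by
    have h0 : deriv (fun s => σ x s) t
        = (1 / Ju) * vX - σ x t / (Ju * η) - (A * Real.Gamma (1 + α) / Ju) * S := by
      rw [heq2 x t, (aux_space v hv x t).deriv, hvX, hS]
    exact h0 ▸ (aux_time σ hσ x t).differentiableAt.hasDerivAt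
  have hφT : ∀ ℓ, HasDerivAt (fun s => φ ℓ x s)
      (γ ℓ * vX - θ ℓ ^ 2 * φ ℓ x t - (γ ℓ / η) * σ x t - Υ ℓ * S) t := by
    intro ℓ
    have h0 : deriv (fun s => φ ℓ x s) t
        = γ ℓ * vX - θ ℓ ^ 2 * φ ℓ x t - (γ ℓ / η) * σ x t - Υ ℓ * S := by
      rw [heq3 ℓ x t, (aux_space v hv x t).deriv, hvX, hS]
    exact h0 ▸ (aux_time (φ ℓ) (hφ ℓ) x t).differentiableAt.hasDerivAt
  have hST : A * Real.Gamma (1 + α) * S = Real.sqrt Ju * T1 := by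
    rw [hS, hT1, Finset.mul_sum, Finset.mul_sum]
    refine Finset.sum_congr rfl fun j _ => ?_
    rw [hΥ j]
    field_simp [hγ0 j]
  have h1 : HasDerivAt (fun s => ρ * v x s ^ 2) (2 * (v x t * sX)) t := by
    refine ((hvT.pow 2).const_mul ρ).congr_deriv ?_
    field_simp
    ring
  have h2 : HasDerivAt (fun s => Ju * σ x s ^ 2)
      (2 * (σ x t * vX) - 2 * (σ x t ^ 2 / η) - 2 * σ x t * (Real.sqrt Ju * T1)) t := by
    refine ((hσT.pow 2).const_mul Ju).congr_deriv ?_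
    rw [← hST]
    field_simp
    ring
  have h3 : HasDerivAt (fun s => ∑ ℓ : Fin L, (μ ℓ * Υ ℓ / θ ℓ ^ 2) *
        (Real.sqrt Ju * σ x s - φ ℓ x s / (Real.sqrt Ju * γ ℓ)) ^ 2)
      (2 * σ x t * (Real.sqrt Ju * T1) - 2 * T2) t := by
    refine (HasDerivAt.fun_sum (fun ℓ (_ : ℓ ∈ Finset.univ) =>
      ((((hσT.const_mul (Real.sqrt Ju)).sub
        ((hφT ℓ).div_const (Real.sqrt Ju * γ ℓ))).pow 2).const_mul
          (μ ℓ * Υ ℓ / θ ℓ ^ 2)))).congr_deriv ?_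
    symm
    rw [hT1, hT2, Finset.mul_sum, Finset.mul_sum, Finset.mul_sum, ← Finset.sum_sub_distrib]
    refine Finset.sum_congr rfl fun ℓ _ => ?_
    rw [hΥ ℓ]
    generalize hgen : Real.sqrt Ju = r
    have hr0 : r ≠ 0 := hgen ▸ hsqrt
    have hr2 : r ^ 2 = Ju := hgen ▸ hJu2
    rw [← hr2]
    have hγℓ : γ ℓ ≠ 0 := hγ0 ℓ
    have hθℓ : θ ℓ ≠ 0 := hθ0 ℓ
    simp only [Pi.sub_apply]
    field_simp
    have hP : r * r⁻¹ * (γ ℓ * (γ ℓ)⁻¹) = 1 := by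
      rw [mul_inv_cancel₀ hr0, mul_inv_cancel₀ hγℓ, one_mul]
    linear_combination (μ ℓ * A * Real.Gamma (1 + α) * φ ℓ x t ^ 2 * θ ℓ ^ 2 * η * 2
      - μ ℓ * A * Real.Gamma (1 + α) * φ ℓ x t * σ x t * θ ℓ ^ 2 * η * 2 * r ^ 2 * γ ℓ) * hP
  refine ((h1.add h2).add h3).congr_deriv ?_
  ring

private lemma aux_cont (f : ℝ → ℝ → ℝ) (hf : ContDiff ℝ 1 (Function.uncurry f)) (w : ℝ × ℝ) :
    Continuous (fun p : ℝ × ℝ => fderiv ℝ (Function.uncurry f) p w) :=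
  (ContinuousLinearMap.apply ℝ ℝ w).continuous.comp (hf.continuous_fderiv one_ne_zero)

theorem stmt_6 (ρ Ju η A α : ℝ) (hρ : 0 < ρ) (hJ : 0 < Ju) (hη : 0 < η) (hA : 0 < A)
    (hα0 : 0 < α) (hα1 : α < 1) (L : ℕ) (hL : 1 ≤ L)
    (θ μ γ Υ : Fin L → ℝ) (hθ : ∀ ℓ, 0 < θ ℓ) (hμ : ∀ ℓ, 0 < μ ℓ)
    (hγ : ∀ ℓ, γ ℓ = (2 * Real.sin (Real.pi * α) / (Real.pi * Ju)) * θ ℓ ^ (1 - 2 * α))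
    (hΥ : ∀ ℓ, Υ ℓ = A * Real.Gamma (1 + α) * γ ℓ)
    (v σ : ℝ → ℝ → ℝ) (φ : Fin L → ℝ → ℝ → ℝ)
    (hv : ContDiff ℝ 1 (Function.uncurry v)) (hσ : ContDiff ℝ 1 (Function.uncurry σ))
    (hφ : ∀ ℓ, ContDiff ℝ 1 (Function.uncurry (φ ℓ)))
    (hsupp : ∀ a b : ℝ, ∃ R : ℝ, ∀ t ∈ Set.Icc a b, ∀ x : ℝ, R < |x| →
      v x t = 0 ∧ σ x t = 0 ∧ ∀ ℓ, φ ℓ x t = 0)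
    (heq1 : ∀ x t : ℝ, deriv (fun s => v x s) t = (1 / ρ) * deriv (fun y => σ y t) x)
    (heq2 : ∀ x t : ℝ, deriv (fun s => σ x s) t =
      (1 / Ju) * deriv (fun y => v y t) x - σ x t / (Ju * η)
        - (A * Real.Gamma (1 + α) / Ju) * ∑ j : Fin L, μ j * φ j x t)
    (heq3 : ∀ (ℓ : Fin L) (x t : ℝ), deriv (fun s => φ ℓ x s) t =
      γ ℓ * deriv (fun y => v y t) x - θ ℓ ^ 2 * φ ℓ x t - (γ ℓ / η) * σ x t
        - Υ ℓ * ∑ j : Fin L, μ j * φ j x t)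
    (E : ℝ → ℝ)
    (hE : ∀ t : ℝ, E t = (1 / 2) * ∫ x : ℝ,
      (ρ * v x t ^ 2 + Ju * σ x t ^ 2 +
        ∑ ℓ : Fin L, (μ ℓ * Υ ℓ / θ ℓ ^ 2) *
          (Real.sqrt Ju * σ x t - φ ℓ x t / (Real.sqrt Ju * γ ℓ)) ^ 2)) :
    ∀ t : ℝ,
      HasDerivAt E
        (-(∫ x : ℝ, (σ x t ^ 2 / η +
          ∑ ℓ : Fin L, μ ℓ * Υ ℓ * (φ ℓ x t / (Real.sqrt Ju * γ ℓ)) ^ 2))) t ∧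
      (-(∫ x : ℝ, (σ x t ^ 2 / η +
          ∑ ℓ : Fin L, μ ℓ * Υ ℓ * (φ ℓ x t / (Real.sqrt Ju * γ ℓ)) ^ 2)) : ℝ) ≤ 0 := by
  intro t
  -- positivity facts
  have hsin : 0 < Real.sin (Real.pi * α) :=
    Real.sin_pos_of_pos_of_lt_pi (mul_pos Real.pi_pos hα0) (by nlinarith [Real.pi_pos])
  have hγpos : ∀ ℓ, 0 < γ ℓ := fun ℓ => by
    rw [hγ ℓ]
    exact mul_pos (div_pos (by linarith) (mul_pos Real.pi_pos hJ))
      (Real.rpow_pos_of_pos (hθ ℓ) _)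
  have hΥpos : ∀ ℓ, 0 < Υ ℓ := fun ℓ => by
    rw [hΥ ℓ]
    exact mul_pos (mul_pos hA (Real.Gamma_pos_of_pos (by linarith))) (hγpos ℓ)
  obtain ⟨R, hR⟩ := hsupp (t - 1) (t + 1)
  have htmem : t ∈ Set.Icc (t - 1) (t + 1) := by constructor <;> linarith
  -- the time derivative of the integrand
  set G : ℝ → ℝ → ℝ := fun x s =>
    2 * (fderiv ℝ (Function.uncurry v) (x, s) (1, 0) * σ x s
        + v x s * fderiv ℝ (Function.uncurry σ) (x, s) (1, 0))
      - 2 * (σ x s ^ 2 / η +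
        ∑ ℓ : Fin L, μ ℓ * Υ ℓ * (φ ℓ x s / (Real.sqrt Ju * γ ℓ)) ^ 2) with hGdef
  have hFt : ∀ x s : ℝ, HasDerivAt (fun s' => ρ * v x s' ^ 2 + Ju * σ x s' ^ 2 +
      ∑ ℓ : Fin L, (μ ℓ * Υ ℓ / θ ℓ ^ 2) *
        (Real.sqrt Ju * σ x s' - φ ℓ x s' / (Real.sqrt Ju * γ ℓ)) ^ 2) (G x s) s := by
    intro x s
    rw [hGdef]
    exact aux_pointwise ρ Ju η A α hρ.ne' hJ hη.ne' L θ μ γ Υ (fun ℓ => (hθ ℓ).ne')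
      (fun ℓ => (hγpos ℓ).ne') hΥ v σ φ hv hσ hφ heq1 heq2 heq3 x s
  -- continuity facts
  have hDc : Continuous (fun p : ℝ × ℝ => σ p.1 p.2 ^ 2 / η +
      ∑ ℓ : Fin L, μ ℓ * Υ ℓ * (φ ℓ p.1 p.2 / (Real.sqrt Ju * γ ℓ)) ^ 2) := by
    apply Continuous.add
    · exact (hσ.continuous.pow 2).div_const η
    · exact continuous_finset_sum _ fun ℓ _ =>
        continuous_const.mul (((hφ ℓ).continuous.div_const _).pow 2)
  have hGc : Continuous (fun p : ℝ × ℝ => G p.1 p.2) := by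
    rw [hGdef]
    exact (continuous_const.mul (((aux_cont v hv (1, 0)).mul hσ.continuous).add
      (hv.continuous.mul (aux_cont σ hσ (1, 0))))).sub (continuous_const.mul hDc)
  have hFc : Continuous (fun p : ℝ × ℝ => ρ * v p.1 p.2 ^ 2 + Ju * σ p.1 p.2 ^ 2 +
      ∑ ℓ : Fin L, (μ ℓ * Υ ℓ / θ ℓ ^ 2) *
        (Real.sqrt Ju * σ p.1 p.2 - φ ℓ p.1 p.2 / (Real.sqrt Ju * γ ℓ)) ^ 2) := by
    apply Continuous.add
    apply Continuous.add
    · exact continuous_const.mul (hv.continuous.pow 2)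
    · exact continuous_const.mul (hσ.continuous.pow 2)
    · exact continuous_finset_sum _ fun ℓ _ =>
        continuous_const.mul ((((continuous_const.mul hσ.continuous)).sub ((hφ ℓ).continuous.div_const _)).pow 2)
  -- vanishing of space-derivatives outside the support
  have hzero : ∀ s ∈ Set.Icc (t - 1) (t + 1), ∀ x : ℝ, R < |x| →
      fderiv ℝ (Function.uncurry v) (x, s) (1, 0) = 0 ∧
      fderiv ℝ (Function.uncurry σ) (x, s) (1, 0) = 0 := by
    intro s hs x hx
    have hopen : IsOpen {y : ℝ | R < |y|} := isOpen_lt continuous_const continuous_abs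
    have hmem : {y : ℝ | R < |y|} ∈ nhds x := hopen.mem_nhds hx
    constructor
    · have hev : (fun y => v y s) =ᶠ[nhds x] (fun _ => (0 : ℝ)) := by
        filter_upwards [hmem] with y hy
        exact (hR s hs y hy).1
      exact (aux_space v hv x s).unique
        ((hasDerivAt_const x (0 : ℝ)).congr_of_eventuallyEq hev)
    · have hev : (fun y => σ y s) =ᶠ[nhds x] (fun _ => (0 : ℝ)) := by
        filter_upwards [hmem] with y hy
        exact (hR s hs y hy).2.1
      exact (aux_space σ hσ x s).unique
        ((hasDerivAt_const x (0 : ℝ)).congr_of_eventuallyEq hev)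
  have habs : ∀ x : ℝ, x ∉ Set.Icc (-R) R → R < |x| := by
    intro x hx
    rw [Set.mem_Icc, not_and_or, not_le, not_le] at hx
    rcases hx with h | h
    · exact lt_abs.2 (Or.inr (by linarith))
    · exact lt_abs.2 (Or.inl h)
  -- integrability of the integrand and of the dissipation
  have hFint : Integrable (fun x => ρ * v x t ^ 2 + Ju * σ x t ^ 2 +
      ∑ ℓ : Fin L, (μ ℓ * Υ ℓ / θ ℓ ^ 2) *
        (Real.sqrt Ju * σ x t - φ ℓ x t / (Real.sqrt Ju * γ ℓ)) ^ 2) := by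
    refine (hFc.comp (continuous_id.prodMk continuous_const)).integrable_of_hasCompactSupport
      (HasCompactSupport.intro (isCompact_Icc (a := -R) (b := R)) fun x hx => ?_)
    obtain ⟨h1, h2, h3⟩ := hR t htmem x (habs x hx)
    simp [h1, h2, h3]
  have hDint : Integrable (fun x => σ x t ^ 2 / η +
      ∑ ℓ : Fin L, μ ℓ * Υ ℓ * (φ ℓ x t / (Real.sqrt Ju * γ ℓ)) ^ 2) := by
    refine (hDc.comp (continuous_id.prodMk continuous_const)).integrable_of_hasCompactSupport
      (HasCompactSupport.intro (isCompact_Icc (a := -R) (b := R)) fun x hx => ?_)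
    obtain ⟨h1, h2, h3⟩ := hR t htmem x (habs x hx)
    simp [h1, h2, h3]
  -- bound for the derivative on the strip
  obtain ⟨C, hC⟩ := ((isCompact_Icc (a := -R) (b := R)).prod (isCompact_Icc (a := t - 1) (b := t + 1))
    ).exists_bound_of_continuousOn hGc.continuousOn
  have hBint : Integrable (Set.indicator (Set.Icc (-R) R) fun _ => max C 0) := by
    rw [integrable_indicator_iff measurableSet_Icc]
    exact integrableOn_const measure_Icc_lt_top.ne
  have hball : ∀ s ∈ Metric.ball t 1, s ∈ Set.Icc (t - 1) (t + 1) := by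
    intro s hs
    rw [Metric.mem_ball, Real.dist_eq] at hs
    have := abs_lt.1 hs
    constructor <;> linarith [this.1, this.2]
  have hbound : ∀ᵐ x : ℝ, ∀ s ∈ Metric.ball t 1,
      ‖G x s‖ ≤ Set.indicator (Set.Icc (-R) R) (fun _ => max C 0) x := by
    refine Filter.Eventually.of_forall fun x s hs => ?_
    have hsI := hball s hs
    by_cases hxR : x ∈ Set.Icc (-R) R
    · rw [Set.indicator_of_mem hxR]
      exact le_trans (hC (x, s) (Set.mem_prod.2 ⟨hxR, hsI⟩)) (le_max_left _ _)
    · rw [Set.indicator_of_notMem hxR]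
      obtain ⟨h1, h2, h3⟩ := hR s hsI x (habs x hxR)
      obtain ⟨h4, h5⟩ := hzero s hsI x (habs x hxR)
      simp [hGdef, h1, h2, h3, h4, h5]
  -- differentiate under the integral sign
  have hmain : HasDerivAt (fun s => ∫ x : ℝ, (ρ * v x s ^ 2 + Ju * σ x s ^ 2 +
      ∑ ℓ : Fin L, (μ ℓ * Υ ℓ / θ ℓ ^ 2) *
        (Real.sqrt Ju * σ x s - φ ℓ x s / (Real.sqrt Ju * γ ℓ)) ^ 2))
      (∫ x : ℝ, G x t) t := by
    refine (hasDerivAt_integral_of_dominated_loc_of_deriv_le (Metric.ball_mem_nhds t one_pos)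
      (Filter.Eventually.of_forall fun s => ?_) hFint ?_ hbound hBint
      (Filter.Eventually.of_forall fun x s _ => hFt x s)).2
    · exact ((hFc.comp (continuous_id.prodMk continuous_const)).aestronglyMeasurable)
    · exact ((hGc.comp (continuous_id.prodMk continuous_const)).aestronglyMeasurable)
  -- the flux term integrates to zero
  have hWcd : ContDiff ℝ 1 (fun y : ℝ => v y t * σ y t) :=
    (hv.comp (contDiff_id.prodMk contDiff_const)).mul (hσ.comp (contDiff_id.prodMk contDiff_const))
  have hWsupp : HasCompactSupport (fun y : ℝ => v y t * σ y t) := by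
    refine HasCompactSupport.intro (isCompact_Icc (a := -R) (b := R)) fun x hx => ?_
    obtain ⟨h1, _, _⟩ := hR t htmem x (habs x hx)
    simp [h1]
  have hWint : Integrable (deriv (fun y : ℝ => v y t * σ y t)) :=
    (hWcd.continuous_deriv le_rfl).integrable_of_hasCompactSupport hWsupp.deriv
  have hWzero : ∫ x : ℝ, deriv (fun y : ℝ => v y t * σ y t) x = 0 := by
    rw [← intervalIntegral.integral_Iic_add_Ioi (b := 0) hWint.integrableOn hWint.integrableOn,
      HasCompactSupport.integral_Iic_deriv_eq hWcd hWsupp 0,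
      HasCompactSupport.integral_Ioi_deriv_eq hWcd hWsupp 0]
    ring
  have hderivW : ∀ x : ℝ, deriv (fun y : ℝ => v y t * σ y t) x =
      fderiv ℝ (Function.uncurry v) (x, t) (1, 0) * σ x t
        + v x t * fderiv ℝ (Function.uncurry σ) (x, t) (1, 0) := fun x =>
    ((aux_space v hv x t).mul (aux_space σ hσ x t)).deriv
  -- value of the derivative
  have hval : (1 / 2 : ℝ) * ∫ x : ℝ, G x t = -(∫ x : ℝ, (σ x t ^ 2 / η +
      ∑ ℓ : Fin L, μ ℓ * Υ ℓ * (φ ℓ x t / (Real.sqrt Ju * γ ℓ)) ^ 2)) := by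
    have h1 : ∫ x : ℝ, G x t = ∫ x : ℝ,
        (2 * deriv (fun y : ℝ => v y t * σ y t) x - 2 * (σ x t ^ 2 / η +
          ∑ ℓ : Fin L, μ ℓ * Υ ℓ * (φ ℓ x t / (Real.sqrt Ju * γ ℓ)) ^ 2)) := by
      refine integral_congr_ae (Filter.Eventually.of_forall fun x => ?_)
      rw [hGdef]
      simp only [hderivW x]
    rw [h1, integral_sub (hWint.const_mul 2) (hDint.const_mul 2),
      integral_const_mul, integral_const_mul, hWzero]
    ring
  constructor
  · have hEeq : E = fun s => (1 / 2 : ℝ) * ∫ x : ℝ, (ρ * v x s ^ 2 + Ju * σ x s ^ 2 +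
        ∑ ℓ : Fin L, (μ ℓ * Υ ℓ / θ ℓ ^ 2) *
          (Real.sqrt Ju * σ x s - φ ℓ x s / (Real.sqrt Ju * γ ℓ)) ^ 2) := funext hE
    rw [hEeq]
    have h := HasDerivAt.const_mul ((1 : ℝ) / 2) hmain
    rwa [hval] at h
  · refine neg_nonpos.2 (integral_nonneg fun x => add_nonneg
      (div_nonneg (sq_nonneg _) hη.le)
      (Finset.sum_nonneg fun ℓ _ => mul_nonneg
        (mul_nonneg (hμ ℓ).le (hΥpos ℓ).le) (sq_nonneg _)))
end

section
/- Let 0 < α < 1 and let σ : ℝ → ℝ be continuously differentiable with σ(0) = 0. For t ≥ 0 and θ > 0 define the diffusive variable φ(t, θ) = (2 sin(πα)/π) θ^{1−2α} ∫₀^t σ'(τ) e^{−(t−τ)θ²} dτ. Then for every t > 0 the function θ ↦ φ(t, θ) is integrable on (0, +∞) and ∫₀^{+∞} φ(t, θ) dθ = (1/Γ(α)) ∫₀^t (t−τ)^{α−1} σ'(τ) dτ, i.e. the improper integral of the diffusive variable equals the Caputo fractional derivative of σ of order 1−α. -/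
open MeasureTheory

lemma aux_eval {α s : ℝ} (hα1 : α < 1) (hs : 0 < s) :
    ∫ θ in Set.Ioi (0:ℝ), θ ^ (1 - 2*α) * Real.exp (-s * θ ^ 2)
      = s ^ (α - 1) * (1/2) * Real.Gamma (1 - α) := by
  have h := integral_rpow_mul_exp_neg_mul_rpow (p := 2) (q := 1 - 2*α) (b := s)
    two_pos (by linarith) hs
  rw [show (-(1 - 2*α + 1)/2 : ℝ) = α - 1 by ring,
      show ((1 - 2*α + 1)/2 : ℝ) = 1 - α by ring] at h
  simp_rw [← Real.rpow_two]
  exact h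

theorem stmt_8 (α : ℝ) (hα0 : 0 < α) (hα1 : α < 1) (σ : ℝ → ℝ)
    (hσ : ContDiff ℝ 1 σ) (hσ0 : σ 0 = 0)
    (φ : ℝ → ℝ → ℝ)
    (hφ : ∀ t θ : ℝ, φ t θ =
      (2 * Real.sin (Real.pi * α) / Real.pi) * θ ^ (1 - 2 * α) *
        ∫ τ in (0 : ℝ)..t, deriv σ τ * Real.exp (-(t - τ) * θ ^ 2)) :
    ∀ t : ℝ, 0 < t →
      IntegrableOn (fun θ => φ t θ) (Set.Ioi (0 : ℝ)) ∧
      ∫ θ in Set.Ioi (0 : ℝ), φ t θ =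
        (1 / Real.Gamma α) * ∫ τ in (0 : ℝ)..t, (t - τ) ^ (α - 1) * deriv σ τ := by
  intro t ht
  have hf : Continuous (deriv σ) := hσ.continuous_deriv le_rfl
  set c : ℝ := 2 * Real.sin (Real.pi * α) / Real.pi with hc
  set f : ℝ → ℝ := deriv σ with hfdef
  set μ : Measure ℝ := volume.restrict (Set.Ioi (0:ℝ)) with hμ
  set ν : Measure ℝ := volume.restrict (Set.Ioo (0:ℝ) t) with hν
  set H : ℝ × ℝ → ℝ :=
    fun p => p.1 ^ (1 - 2*α) * (f p.2 * Real.exp (-(t - p.2) * p.1 ^ 2)) with hHdef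
  -- measurability
  have hHm : AEStronglyMeasurable H (μ.prod ν) := by
    apply Measurable.aestronglyMeasurable
    fun_prop
  -- bound on f
  obtain ⟨M, hM⟩ : ∃ M, ∀ τ ∈ Set.Icc (0:ℝ) t, ‖f τ‖ ≤ M :=
    isCompact_Icc.exists_bound_of_continuousOn hf.continuousOn
  have hM0 : 0 ≤ M := (norm_nonneg _).trans (hM 0 ⟨le_rfl, ht.le⟩)
  -- integrability of (t-τ)^(α-1) on Ioo 0 t
  have hrpow : IntegrableOn (fun τ : ℝ => (t - τ) ^ (α - 1)) (Set.Ioo 0 t) := by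
    have h1 : IntervalIntegrable (fun x : ℝ => x ^ (α-1)) volume 0 t :=
      intervalIntegral.intervalIntegrable_rpow' (by linarith)
    have h2 := (h1.comp_sub_left t).symm
    rw [sub_self, sub_zero] at h2
    exact ((intervalIntegrable_iff_integrableOn_Ioc_of_le ht.le).mp h2).mono_set
      Set.Ioo_subset_Ioc_self
  -- per-τ integrability in θ and value of norm integral
  have hτint : ∀ τ ∈ Set.Ioo (0:ℝ) t, Integrable (fun θ => H (θ, τ)) μ := by
    intro τ hτ
    have hs : 0 < t - τ := by linarith [hτ.2]
    have base := integrableOn_rpow_mul_exp_neg_mul_sq hs (show (-1:ℝ) < 1 - 2*α by linarith)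
    have : (fun θ => H (θ, τ)) =
        fun θ => f τ * (θ ^ (1 - 2*α) * Real.exp (-(t - τ) * θ ^ 2)) := by
      funext θ; simp only [hHdef]; ring
    rw [this]
    exact base.const_mul _
  have hnormint : ∀ τ ∈ Set.Ioo (0:ℝ) t,
      ∫ θ, ‖H (θ, τ)‖ ∂μ = |f τ| * ((t - τ) ^ (α - 1) * (1/2) * Real.Gamma (1 - α)) := by
    intro τ hτ
    have hs : 0 < t - τ := by linarith [hτ.2]
    have h1 : ∫ θ, ‖H (θ, τ)‖ ∂μ
        = ∫ θ in Set.Ioi (0:ℝ), |f τ| * (θ ^ (1 - 2*α) * Real.exp (-(t - τ) * θ ^ 2)) := by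
      refine setIntegral_congr_fun measurableSet_Ioi (fun θ hθ => ?_)
      simp only [hHdef, Real.norm_eq_abs, abs_mul]
      rw [abs_of_nonneg (Real.rpow_nonneg (le_of_lt hθ) _),
        abs_of_nonneg (Real.exp_pos _).le]
      ring
    rw [h1, MeasureTheory.integral_const_mul, aux_eval hα1 hs]
  -- product integrability
  have hHint : Integrable H (μ.prod ν) := by
    rw [integrable_prod_iff' hHm]
    constructor
    · filter_upwards [ae_restrict_mem measurableSet_Ioo] with τ hτ using hτint τ hτ
    · have hΓ1 : 0 < Real.Gamma (1 - α) := Real.Gamma_pos_of_pos (by linarith)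
      have hgi : Integrable
          (fun τ => |f τ| * ((t - τ) ^ (α - 1) * (1/2) * Real.Gamma (1 - α))) ν := by
        apply Integrable.mono' (hrpow.mul_const (M * ((1/2) * Real.Gamma (1 - α))))
        · apply Measurable.aestronglyMeasurable
          fun_prop
        · filter_upwards [ae_restrict_mem measurableSet_Ioo] with τ hτ
          have hs : (0:ℝ) ≤ t - τ := by linarith [hτ.2]
          have hrp : (0:ℝ) ≤ (t - τ) ^ (α - 1) := Real.rpow_nonneg hs _
          rw [Real.norm_eq_abs, abs_mul, abs_abs, abs_of_nonneg (by positivity :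
            (0:ℝ) ≤ (t - τ) ^ (α - 1) * (1/2) * Real.Gamma (1 - α))]
          calc |f τ| * ((t - τ) ^ (α - 1) * (1/2) * Real.Gamma (1 - α))
              ≤ M * ((t - τ) ^ (α - 1) * (1/2) * Real.Gamma (1 - α)) := by
                apply mul_le_mul_of_nonneg_right (hM τ ⟨hτ.1.le, hτ.2.le⟩) (by positivity)
            _ = (t - τ) ^ (α - 1) * (M * ((1/2) * Real.Gamma (1 - α))) := by ring
      exact hgi.congr (by
        filter_upwards [ae_restrict_mem measurableSet_Ioo] with τ hτ
        exact (hnormint τ hτ).symm)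
  -- φ as a ν-integral
  have hφeq : ∀ θ : ℝ, φ t θ = c * ∫ τ, H (θ, τ) ∂ν := by
    intro θ
    rw [hφ t θ]
    have h2 : ∫ τ, H (θ, τ) ∂ν
        = θ ^ (1 - 2*α) * ∫ τ in Set.Ioo (0:ℝ) t, f τ * Real.exp (-(t - τ) * θ ^ 2) := by
      simp only [hHdef]
      exact MeasureTheory.integral_const_mul _ _
    rw [h2, intervalIntegral.integral_of_le ht.le,
      MeasureTheory.integral_Ioc_eq_integral_Ioo]
    ring
  constructor
  · have h1 : Integrable (fun θ => ∫ τ, H (θ, τ) ∂ν) μ := hHint.integral_prod_left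
    have := h1.const_mul c
    exact this.congr (Filter.Eventually.of_forall fun θ => (hφeq θ).symm)
  · have hswap : ∫ θ, (∫ τ, H (θ, τ) ∂ν) ∂μ = ∫ τ, (∫ θ, H (θ, τ) ∂μ) ∂ν := by
      rw [← MeasureTheory.integral_prod _ hHint, ← MeasureTheory.integral_prod_symm _ hHint]
    have hinner : ∀ τ ∈ Set.Ioo (0:ℝ) t,
        (∫ θ, H (θ, τ) ∂μ) = ((1/2) * Real.Gamma (1 - α)) * ((t - τ) ^ (α - 1) * f τ) := by
      intro τ hτ
      have hs : 0 < t - τ := by linarith [hτ.2]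
      have h1 : (∫ θ, H (θ, τ) ∂μ)
          = ∫ θ in Set.Ioi (0:ℝ), f τ * (θ ^ (1 - 2*α) * Real.exp (-(t - τ) * θ ^ 2)) := by
        refine setIntegral_congr_fun measurableSet_Ioi (fun θ hθ => ?_)
        simp only [hHdef]; ring
      rw [h1, MeasureTheory.integral_const_mul, aux_eval hα1 hs]
      ring
    have hconst : c * ((1/2) * Real.Gamma (1 - α)) = 1 / Real.Gamma α := by
      have hsin : 0 < Real.sin (Real.pi * α) :=
        Real.sin_pos_of_pos_of_lt_pi (by positivity)
          ((mul_lt_iff_lt_one_right Real.pi_pos).mpr hα1)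
      have hΓα : 0 < Real.Gamma α := Real.Gamma_pos_of_pos hα0
      have h := Real.Gamma_mul_Gamma_one_sub α
      rw [hc]
      have hπ : (0:ℝ) < Real.pi := Real.pi_pos
      have h2 : Real.Gamma α * Real.Gamma (1 - α) * Real.sin (Real.pi * α) = Real.pi := by
        rw [h]; field_simp
      field_simp
      linear_combination h2
    calc ∫ θ in Set.Ioi (0:ℝ), φ t θ = ∫ θ, c * (∫ τ, H (θ, τ) ∂ν) ∂μ := by
          exact setIntegral_congr_fun measurableSet_Ioi (fun θ _ => hφeq θ)
      _ = c * ∫ θ, (∫ τ, H (θ, τ) ∂ν) ∂μ := MeasureTheory.integral_const_mul _ _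
      _ = c * ∫ τ, (∫ θ, H (θ, τ) ∂μ) ∂ν := by rw [hswap]
      _ = c * ∫ τ in Set.Ioo (0:ℝ) t,
            ((1/2) * Real.Gamma (1 - α)) * ((t - τ) ^ (α - 1) * f τ) := by
          congr 1
          exact setIntegral_congr_fun measurableSet_Ioo hinner
      _ = (c * ((1/2) * Real.Gamma (1 - α))) *
            ∫ τ in Set.Ioo (0:ℝ) t, (t - τ) ^ (α - 1) * f τ := by
          rw [MeasureTheory.integral_const_mul]; ring
      _ = (1 / Real.Gamma α) * ∫ τ in (0:ℝ)..t, (t - τ) ^ (α - 1) * f τ := by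
          rw [hconst, intervalIntegral.integral_of_le ht.le,
            MeasureTheory.integral_Ioc_eq_integral_Ioo]
end

section
/- For every real α with 0 < α < 1 and every real ω > 0, the complex-valued improper integral converges and (2 sin(πα)/π) ∫₀^{+∞} θ^{1−2α} / (θ² + iω) dθ = ω^{−α} ( cos(πα/2) − i sin(πα/2) ), i.e. it equals (iω)^{−α} for the principal branch of the complex power. -/
open MeasureTheory Set Real

lemma contOn_aux {s : ℝ} (g : ℝ → ℝ) (hg : ContinuousOn g (Ioi 0))
    (hgpos : ∀ x ∈ Ioi (0:ℝ), 0 < g x) {t : Set ℝ} (ht : t ⊆ Ioi 0) (hm : MeasurableSet t) :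
    AEStronglyMeasurable (fun x : ℝ => x ^ (s - 1) / g x) (volume.restrict t) := by
  apply ContinuousOn.aestronglyMeasurable _ hm
  apply ContinuousOn.div
  · exact continuousOn_id.rpow_const (fun x hx => Or.inl (ne_of_gt (ht hx)))
  · exact hg.mono ht
  · exact fun x hx => (hgpos x (ht hx)).ne'

lemma intOn_aux {s : ℝ} (h0 : 0 < s) (h1 : s < 1) :
    IntegrableOn (fun x : ℝ => x ^ (s - 1) / (1 + x)) (Ioi 0) := by
  have hg : ContinuousOn (fun x : ℝ => 1 + x) (Ioi 0) := by fun_prop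
  have hgpos : ∀ x ∈ Ioi (0:ℝ), 0 < 1 + x := fun x hx => by
    simp only [mem_Ioi] at hx; linarith
  rw [← Ioc_union_Ioi_eq_Ioi (zero_le_one)]
  apply IntegrableOn.union
  · have hbase : IntegrableOn (fun x : ℝ => x ^ (s - 1)) (Ioc (0:ℝ) 1) := by
      rw [← intervalIntegrable_iff_integrableOn_Ioc_of_le zero_le_one]
      exact intervalIntegral.intervalIntegrable_rpow' (by linarith)
    refine hbase.mono' (contOn_aux _ hg hgpos Ioc_subset_Ioi_self measurableSet_Ioc) ?_
    rw [ae_restrict_iff' measurableSet_Ioc]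
    filter_upwards with x hx
    have hx0 : 0 < x := hx.1
    have h1x : (0:ℝ) < 1 + x := by linarith
    rw [Real.norm_eq_abs, abs_of_nonneg (by positivity), div_le_iff₀ h1x]
    nlinarith [rpow_nonneg hx0.le (s-1)]
  · have hbase : IntegrableOn (fun x : ℝ => x ^ (s - 2)) (Ioi (1:ℝ)) :=
      integrableOn_Ioi_rpow_of_lt (by linarith) one_pos
    refine hbase.mono' (contOn_aux _ hg hgpos (Ioi_subset_Ioi zero_le_one) measurableSet_Ioi) ?_
    rw [ae_restrict_iff' measurableSet_Ioi]
    filter_upwards with x hx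
    simp only [mem_Ioi] at hx
    have hx0 : (0:ℝ) < x := lt_trans one_pos hx
    have h1x : (0:ℝ) < 1 + x := by linarith
    rw [Real.norm_eq_abs, abs_of_nonneg (by positivity), div_le_iff₀ h1x]
    have : x ^ (s - 2) * x = x ^ (s - 1) := by
      rw [← rpow_add_one hx0.ne']; ring_nf
    nlinarith [rpow_nonneg hx0.le (s-2), rpow_nonneg hx0.le (s-1)]

lemma intOn_aux4 {q c : ℝ} (h0 : 0 < q) (h4 : q < 4) (hc : 0 < c) :
    IntegrableOn (fun x : ℝ => x ^ (q - 1) / (x ^ 4 + c)) (Ioi 0) := by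
  have hg : ContinuousOn (fun x : ℝ => x ^ 4 + c) (Ioi 0) := by fun_prop
  have hgpos : ∀ x ∈ Ioi (0:ℝ), 0 < x ^ 4 + c := fun x hx => by positivity
  rw [← Ioc_union_Ioi_eq_Ioi (zero_le_one)]
  apply IntegrableOn.union
  · have hbase : IntegrableOn (fun x : ℝ => c⁻¹ * x ^ (q - 1)) (Ioc (0:ℝ) 1) := by
      exact ((intervalIntegrable_iff_integrableOn_Ioc_of_le zero_le_one).mp
        (intervalIntegral.intervalIntegrable_rpow' (by linarith))).const_mul _
    refine hbase.mono' (contOn_aux _ hg hgpos Ioc_subset_Ioi_self measurableSet_Ioc) ?_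
    rw [ae_restrict_iff' measurableSet_Ioc]
    filter_upwards with x hx
    have hx0 : 0 < x := hx.1
    have h1x : (0:ℝ) < x ^ 4 + c := by positivity
    rw [Real.norm_eq_abs, abs_of_nonneg (by positivity), div_le_iff₀ h1x]
    have h4' : (0:ℝ) ≤ x ^ 4 := by positivity
    rw [inv_mul_eq_div, div_mul_eq_mul_div, le_div_iff₀ hc]
    nlinarith [rpow_nonneg hx0.le (q-1)]
  · have hbase : IntegrableOn (fun x : ℝ => x ^ (q - 5)) (Ioi (1:ℝ)) :=
      integrableOn_Ioi_rpow_of_lt (by linarith) one_pos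
    refine hbase.mono' (contOn_aux _ hg hgpos (Ioi_subset_Ioi zero_le_one) measurableSet_Ioi) ?_
    rw [ae_restrict_iff' measurableSet_Ioi]
    filter_upwards with x hx
    simp only [mem_Ioi] at hx
    have hx0 : (0:ℝ) < x := lt_trans one_pos hx
    have h1x : (0:ℝ) < x ^ 4 + c := by positivity
    rw [Real.norm_eq_abs, abs_of_nonneg (by positivity), div_le_iff₀ h1x]
    have hkey : x ^ (q - 5) * x ^ 4 = x ^ (q - 1) := by
      rw [← rpow_natCast x 4, ← rpow_add hx0]; congr 1; push_cast; ring
    nlinarith [rpow_nonneg hx0.le (q-5), rpow_nonneg hx0.le (q-1)]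

lemma integral_exp_neg_mul {b : ℝ} (hb : 0 < b) :
    ∫ t in Ioi (0:ℝ), Real.exp (-(b * t)) = b⁻¹ := by
  have := MeasureTheory.integral_comp_mul_left_Ioi (fun u => Real.exp (-u)) 0 hb
  simp only [mul_zero, integral_exp_neg_Ioi, neg_zero, Real.exp_zero, smul_eq_mul,
    mul_one] at this
  simpa using this

lemma mellin_one_add {s : ℝ} (h0 : 0 < s) (h1 : s < 1) :
    ∫ x in Ioi (0:ℝ), x ^ (s - 1) / (1 + x) = π / Real.sin (π * s) := by
  set μ := volume.restrict (Ioi (0:ℝ)) with hμ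
  set f : ℝ → ℝ → ℝ := fun x t => x ^ (s - 1) * Real.exp (-((1 + x) * t)) with hf
  have hmeas : AEStronglyMeasurable (Function.uncurry f) (μ.prod μ) := by
    apply Measurable.aestronglyMeasurable
    fun_prop
  have hslice : ∀ x : ℝ, 0 < x → Integrable (fun t => f x t) μ := by
    intro x hx
    have base := (exp_neg_integrableOn_Ioi 0 (by linarith : (0:ℝ) < 1 + x)).const_mul
      (x ^ (s - 1))
    exact base.congr (Filter.Eventually.of_forall fun t => by simp only [hf, neg_mul])
  have hinner0 : ∀ x : ℝ, 0 < x →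
      (∫ t in Ioi (0:ℝ), x ^ (s - 1) * Real.exp (-((1 + x) * t))) = x ^ (s - 1) / (1 + x) := by
    intro x hx
    rw [integral_const_mul, integral_exp_neg_mul (by linarith : (0:ℝ) < 1 + x), div_eq_mul_inv]
  have hnormint : ∀ x : ℝ, 0 < x → (∫ t, ‖f x t‖ ∂μ) = x ^ (s - 1) / (1 + x) := by
    intro x hx
    have h1x : (0:ℝ) < 1 + x := by linarith
    have : ∀ t ∈ Ioi (0:ℝ), ‖f x t‖ = x ^ (s - 1) * Real.exp (-((1 + x) * t)) := by
      intro t ht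
      rw [Real.norm_eq_abs, abs_of_nonneg]
      positivity
    rw [hμ, setIntegral_congr_fun measurableSet_Ioi this]
    exact hinner0 x hx
  have hint : Integrable (Function.uncurry f) (μ.prod μ) := by
    rw [integrable_prod_iff hmeas]
    constructor
    · rw [hμ, ae_restrict_iff' measurableSet_Ioi]
      filter_upwards with x hx
      exact hslice x hx
    · apply (intOn_aux h0 h1).congr
      rw [hμ, Filter.EventuallyEq, ae_restrict_iff' measurableSet_Ioi]
      filter_upwards with x hx
      exact (hnormint x hx).symm
  have hswap := MeasureTheory.integral_integral_swap hint
  have hLHS : (∫ x, ∫ t, f x t ∂μ ∂μ) = ∫ x in Ioi (0:ℝ), x ^ (s - 1) / (1 + x) := by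
    rw [hμ]
    apply setIntegral_congr_fun measurableSet_Ioi
    intro x hx
    simp only [mem_Ioi] at hx
    have h1x : (0:ℝ) < 1 + x := by linarith
    simp only [hf]
    exact hinner0 x hx
  have hRHS : (∫ t, ∫ x, f x t ∂μ ∂μ) = Real.Gamma s * Real.Gamma (1 - s) := by
    rw [hμ]
    have hinner : ∀ t ∈ Ioi (0:ℝ), (∫ x, f x t ∂μ)
        = Real.Gamma s * (t ^ ((1 - s) - 1) * Real.exp (-(1 * t))) := by
      intro t ht
      simp only [mem_Ioi] at ht
      have : ∀ x ∈ Ioi (0:ℝ), f x t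
          = Real.exp (-t) * (x ^ (s - 1) * Real.exp (-(t * x))) := by
        intro x hx
        simp only [hf]
        rw [show -((1+x)*t) = -t + -(t*x) by ring, Real.exp_add]
        ring
      rw [hμ, setIntegral_congr_fun measurableSet_Ioi this, integral_const_mul,
        Real.integral_rpow_mul_exp_neg_mul_Ioi h0 ht]
      have ht' : (0:ℝ) < t := ht
      rw [one_div, Real.inv_rpow ht'.le, ← Real.rpow_neg ht'.le]
      have : -s = 1 - s - 1 := by ring
      rw [this, one_mul]
      ring
    rw [setIntegral_congr_fun measurableSet_Ioi hinner, integral_const_mul,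
      Real.integral_rpow_mul_exp_neg_mul_Ioi (by linarith) one_pos]
    simp
  rw [← Real.Gamma_mul_Gamma_one_sub s, ← hRHS, ← hswap, hLHS]

lemma quartic_int {q : ℝ} (h0 : 0 < q) (h4 : q < 4) :
    ∫ x in Ioi (0:ℝ), x ^ (q - 1) / (1 + x ^ 4) = π / (4 * Real.sin (π * q / 4)) := by
  have key := MeasureTheory.integral_comp_rpow_Ioi (fun y : ℝ => y ^ (q / 4 - 1) / (1 + y))
    (by norm_num : (4:ℝ) ≠ 0)
  have hpt : ∀ x ∈ Ioi (0:ℝ),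
      (|(4:ℝ)| * x ^ ((4:ℝ) - 1)) • ((x ^ (4:ℝ)) ^ (q / 4 - 1) / (1 + x ^ (4:ℝ)))
        = 4 * (x ^ (q - 1) / (1 + x ^ 4)) := by
    intro x hx
    simp only [mem_Ioi] at hx
    have h1 : x ^ (4:ℝ) = x ^ (4:ℕ) := by
      rw [← Real.rpow_natCast x 4]; norm_num
    have h2 : (x ^ (4:ℝ)) ^ (q / 4 - 1) = x ^ (4 * (q / 4 - 1)) := (Real.rpow_mul hx.le _ _).symm
    have h3 : x ^ ((4:ℝ) - 1) * x ^ (4 * (q / 4 - 1)) = x ^ (q - 1) := by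
      rw [← Real.rpow_add hx]; ring_nf
    rw [h2, h1, smul_eq_mul, abs_of_nonneg (by norm_num : (0:ℝ) ≤ 4)]
    field_simp
    rw [← Real.rpow_add hx]
    ring_nf
  rw [setIntegral_congr_fun measurableSet_Ioi hpt, integral_const_mul,
    mellin_one_add (by linarith) (by linarith)] at key
  have hsin : Real.sin (π * (q / 4)) = Real.sin (π * q / 4) := by ring_nf
  rw [hsin] at key
  have hs : Real.sin (π * q / 4) ≠ 0 := by
    apply ne_of_gt
    apply Real.sin_pos_of_pos_of_lt_pi
    · positivity
    · rw [div_lt_iff₀ (by norm_num : (0:ℝ) < 4)]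
      nlinarith [Real.pi_pos]
  field_simp at key ⊢
  linarith [key]

lemma quartic_scaled {q : ℝ} (h0 : 0 < q) (h4 : q < 4) {c : ℝ} (hc : 0 < c) :
    ∫ u in Ioi (0:ℝ), u ^ (q - 1) / (u ^ 4 + c ^ 2)
      = c ^ (q / 2 - 2) * (π / (4 * Real.sin (π * q / 4))) := by
  set b : ℝ := c ^ ((1:ℝ)/2) with hb
  have hbpos : 0 < b := Real.rpow_pos_of_pos hc _
  have hb4 : b ^ 4 = c ^ 2 := by
    rw [hb, ← Real.rpow_natCast (c ^ ((1:ℝ)/2)) 4, ← Real.rpow_mul hc.le,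
      ← Real.rpow_natCast c 2]
    norm_num
  have hbq : b ^ q = c ^ (q / 2) := by
    rw [hb, ← Real.rpow_mul hc.le]; ring_nf
  have key := MeasureTheory.integral_comp_mul_left_Ioi
    (fun u : ℝ => u ^ (q - 1) / (u ^ 4 + c ^ 2)) 0 hbpos
  simp only [mul_zero, smul_eq_mul] at key
  have hpt : ∀ x ∈ Ioi (0:ℝ),
      (b * x) ^ (q - 1) / ((b * x) ^ 4 + c ^ 2)
        = (b ^ (q - 1) / c ^ 2) * (x ^ (q - 1) / (1 + x ^ 4)) := by
    intro x hx
    simp only [mem_Ioi] at hx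
    rw [Real.mul_rpow hbpos.le hx.le, mul_pow, hb4]
    have hc2 : (0:ℝ) < c ^ 2 := by positivity
    have hx4 : (0:ℝ) < 1 + x ^ 4 := by positivity
    field_simp
    ring
  rw [setIntegral_congr_fun measurableSet_Ioi hpt, integral_const_mul, quartic_int h0 h4] at key
  have key2 : (∫ u in Ioi (0:ℝ), u ^ (q - 1) / (u ^ 4 + c ^ 2))
      = b * (b ^ (q - 1) / c ^ 2 * (π / (4 * Real.sin (π * q / 4)))) := by
    rw [key]; field_simp
  rw [key2]
  have : b * (b ^ (q - 1) / c ^ 2 * (π / (4 * Real.sin (π * q / 4))))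
      = (b * b ^ (q - 1) / c ^ 2) * (π / (4 * Real.sin (π * q / 4))) := by ring
  rw [this]
  congr 1
  rw [show b * b ^ (q - 1) = b ^ q by
    nth_rewrite 1 [← Real.rpow_one b]
    rw [← Real.rpow_add hbpos]; ring_nf]
  rw [hbq, ← Real.rpow_natCast c 2, ← Real.rpow_sub hc]
  norm_num

theorem stmt_10 (α ω : ℝ) (hα0 : 0 < α) (hα1 : α < 1) (hω : 0 < ω) :
    IntegrableOn (fun θ : ℝ => ((θ ^ (1 - 2 * α) : ℝ) : ℂ) / ((θ : ℂ) ^ 2 + Complex.I * ω))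
      (Set.Ioi (0 : ℝ)) ∧
    ((2 * Real.sin (Real.pi * α) / Real.pi : ℝ) : ℂ) *
      ∫ θ in Set.Ioi (0 : ℝ), ((θ ^ (1 - 2 * α) : ℝ) : ℂ) / ((θ : ℂ) ^ 2 + Complex.I * ω) =
    ((ω ^ (-α) : ℝ) : ℂ) *
      ((Real.cos (Real.pi * α / 2) : ℂ) - Complex.I * (Real.sin (Real.pi * α / 2) : ℂ)) := by
  set g1 : ℝ → ℝ := fun θ => θ ^ ((4 - 2*α) - 1) / (θ ^ 4 + ω ^ 2) with hg1
  set g2 : ℝ → ℝ := fun θ => θ ^ ((2 - 2*α) - 1) / (θ ^ 4 + ω ^ 2) with hg2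
  -- pointwise decomposition
  have hdec : ∀ θ ∈ Ioi (0:ℝ),
      ((g1 θ : ℂ) - Complex.I * ((ω * g2 θ : ℝ) : ℂ))
        = ((θ ^ (1 - 2 * α) : ℝ) : ℂ) / ((θ : ℂ) ^ 2 + Complex.I * ω) := by
    intro θ hθ
    simp only [mem_Ioi] at hθ
    have hd : ((θ:ℂ) ^ 2 + Complex.I * ω) ≠ 0 := by
      intro h
      have := congrArg Complex.im h
      simp [pow_two, Complex.mul_im] at this
      exact hω.ne' this
    have hdd : (0:ℝ) < θ ^ 4 + ω ^ 2 := by positivity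
    have hr1 : θ ^ ((4 - 2*α) - 1) = θ ^ (1 - 2*α) * θ ^ 2 := by
      rw [← Real.rpow_natCast θ 2, ← Real.rpow_add hθ]
      norm_num
      ring_nf
    have hr2 : (2 - 2*α) - 1 = 1 - 2*α := by ring
    simp only [hg1, hg2, hr1, hr2]
    have hDc : ((θ:ℂ) ^ 4 + (ω:ℂ) ^ 2) ≠ 0 := by
      have : ((θ ^ 4 + ω ^ 2 : ℝ) : ℂ) ≠ 0 := by exact_mod_cast hdd.ne'
      push_cast at this
      exact this
    rw [eq_div_iff hd]
    push_cast
    field_simp [hDc]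
    ring_nf
    rw [Complex.I_sq]
    ring
  have hint1 : IntegrableOn g1 (Ioi 0) :=
    intOn_aux4 (by linarith) (by linarith) (by positivity)
  have hint2 : IntegrableOn g2 (Ioi 0) :=
    intOn_aux4 (by linarith) (by linarith) (by positivity)
  have hintC : IntegrableOn
      (fun θ : ℝ => (g1 θ : ℂ) - Complex.I * ((ω * g2 θ : ℝ) : ℂ)) (Ioi 0) := by
    apply Integrable.sub
    · exact hint1.ofReal
    · exact ((hint2.const_mul ω).ofReal.const_mul Complex.I)
  have hintMain : IntegrableOn
      (fun θ : ℝ => ((θ ^ (1 - 2 * α) : ℝ) : ℂ) / ((θ : ℂ) ^ 2 + Complex.I * ω)) (Ioi 0) :=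
    hintC.congr_fun hdec measurableSet_Ioi
  refine ⟨hintMain, ?_⟩
  -- values of the real integrals
  have hs2 : 0 < Real.sin (π * α / 2) := by
    apply Real.sin_pos_of_pos_of_lt_pi
    · positivity
    · nlinarith [Real.pi_pos]
  have hc2 : 0 < Real.cos (π * α / 2) := by
    apply Real.cos_pos_of_mem_Ioo
    constructor
    · nlinarith [Real.pi_pos]
    · nlinarith [Real.pi_pos]
  have hval1 : ∫ θ in Ioi (0:ℝ), g1 θ = ω ^ (-α) * (π / (4 * Real.sin (π * α / 2))) := by
    rw [hg1]
    rw [quartic_scaled (by linarith) (by linarith) hω]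
    have h1 : (4 - 2*α) / 2 - 2 = -α := by ring
    have h2 : π * (4 - 2*α) / 4 = π - π * α / 2 := by ring
    rw [h1, h2, Real.sin_pi_sub]
  have hval2 : ∫ θ in Ioi (0:ℝ), g2 θ = ω ^ (-α - 1) * (π / (4 * Real.cos (π * α / 2))) := by
    rw [hg2]
    rw [quartic_scaled (by linarith) (by linarith) hω]
    have h1 : (2 - 2*α) / 2 - 2 = -α - 1 := by ring
    have h2 : π * (2 - 2*α) / 4 = π / 2 - π * α / 2 := by ring
    rw [h1, h2, Real.sin_pi_div_two_sub]
  -- compute the complex integral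
  have hIeq : (∫ θ in Ioi (0:ℝ), ((θ ^ (1 - 2 * α) : ℝ) : ℂ) / ((θ : ℂ) ^ 2 + Complex.I * ω))
      = ((∫ θ in Ioi (0:ℝ), g1 θ : ℝ) : ℂ)
        - Complex.I * ((ω * ∫ θ in Ioi (0:ℝ), g2 θ : ℝ) : ℂ) := by
    have e1 : (∫ θ in Ioi (0:ℝ), ((g1 θ : ℂ) - Complex.I * ((ω * g2 θ : ℝ) : ℂ)))
        = (∫ θ in Ioi (0:ℝ), (g1 θ : ℂ))
          - ∫ θ in Ioi (0:ℝ), Complex.I * ((ω * g2 θ : ℝ) : ℂ) :=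
      integral_sub hint1.ofReal ((hint2.const_mul ω).ofReal.const_mul Complex.I)
    have e2 : (∫ θ in Ioi (0:ℝ), (g1 θ : ℂ)) = ((∫ θ in Ioi (0:ℝ), g1 θ : ℝ) : ℂ) :=
      integral_ofReal
    have e3 : (∫ θ in Ioi (0:ℝ), Complex.I * ((ω * g2 θ : ℝ) : ℂ))
        = Complex.I * ((ω * ∫ θ in Ioi (0:ℝ), g2 θ : ℝ) : ℂ) := by
      have e3' : (∫ θ in Ioi (0:ℝ), ((ω * g2 θ : ℝ) : ℂ))
          = ((∫ θ in Ioi (0:ℝ), ω * g2 θ : ℝ) : ℂ) := integral_ofReal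
      rw [integral_const_mul, e3', integral_const_mul]
    rw [← setIntegral_congr_fun measurableSet_Ioi hdec, e1, e2, e3]
  rw [hIeq, hval1, hval2]
  -- real arithmetic
  have hsin : Real.sin (π * α) = 2 * Real.sin (π * α / 2) * Real.cos (π * α / 2) := by
    have h := Real.sin_two_mul (π * α / 2)
    rw [show 2 * (π * α / 2) = π * α by ring] at h
    linarith
  have hA : (2 * Real.sin (π * α) / π) * (ω ^ (-α) * (π / (4 * Real.sin (π * α / 2))))
      = ω ^ (-α) * Real.cos (π * α / 2) := by
    rw [hsin]
    field_simp
    ring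
  have hB : (2 * Real.sin (π * α) / π) * (ω * (ω ^ (-α - 1) * (π / (4 * Real.cos (π * α / 2)))))
      = ω ^ (-α) * Real.sin (π * α / 2) := by
    have hpow : ω * ω ^ (-α - 1) = ω ^ (-α) := by
      nth_rewrite 1 [← Real.rpow_one ω]
      rw [← Real.rpow_add hω]
      ring_nf
    rw [hsin, show ω * (ω ^ (-α - 1) * (π / (4 * Real.cos (π * α / 2))))
        = (ω * ω ^ (-α-1)) * (π / (4 * Real.cos (π * α / 2))) by ring, hpow]
    field_simp
    ring
  calc ((2 * Real.sin (π * α) / π : ℝ) : ℂ) *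
        (((ω ^ (-α) * (π / (4 * Real.sin (π * α / 2))) : ℝ) : ℂ)
          - Complex.I * ((ω * (ω ^ (-α - 1) * (π / (4 * Real.cos (π * α / 2)))) : ℝ) : ℂ))
      = ((2 * Real.sin (π * α) / π * (ω ^ (-α) * (π / (4 * Real.sin (π * α / 2)))) : ℝ) : ℂ)
        - Complex.I * ((2 * Real.sin (π * α) / π *
            (ω * (ω ^ (-α - 1) * (π / (4 * Real.cos (π * α / 2))))) : ℝ) : ℂ) := by
        push_cast; ring
    _ = ((ω ^ (-α) : ℝ) : ℂ) *
        ((Real.cos (π * α / 2) : ℂ) - Complex.I * (Real.sin (π * α / 2) : ℂ)) := by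
        rw [hA, hB]; push_cast; ring
end

section
/- Let ρ, J_u, η, A > 0 and 0 < α < 1, and for ω > 0 let N(ω) = J_u − i/(η ω) + A Γ(1+α) ω^{−α} (cos(πα/2) − i sin(πα/2)) be the Andrade complex compliance, and let c(ω) = √( 2 / ( ρ ( |N(ω)| + Re N(ω) ) ) ) be the phase velocity. Then c(ω) → 0 as ω → 0⁺, and c(ω) → 1/√(ρ J_u) as ω → +∞. -/
open Filter

theorem stmt_11 (ρ Ju η A α : ℝ) (hρ : 0 < ρ) (hJ : 0 < Ju) (hη : 0 < η) (hA : 0 < A)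
    (hα0 : 0 < α) (hα1 : α < 1) (N : ℝ → ℂ) (c : ℝ → ℝ)
    (hN : ∀ ω : ℝ, 0 < ω → N ω =
      (Ju : ℂ) - Complex.I / ((η : ℂ) * (ω : ℂ))
        + ((A * Real.Gamma (1 + α) * ω ^ (-α) : ℝ) : ℂ)
          * ((Real.cos (Real.pi * α / 2) : ℂ) - Complex.I * (Real.sin (Real.pi * α / 2) : ℂ)))
    (hc : ∀ ω : ℝ, 0 < ω →
      c ω = Real.sqrt (2 / (ρ * (‖N ω‖ + (N ω).re)))) :
    Tendsto c (nhdsWithin 0 (Set.Ioi 0)) (nhds 0) ∧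
    Tendsto c atTop (nhds (1 / Real.sqrt (ρ * Ju))) := by
  set K := A * Real.Gamma (1 + α) with hKdef
  have hK : 0 < K := mul_pos hA (Real.Gamma_pos_of_pos (by linarith))
  set cθ := Real.cos (Real.pi * α / 2) with hcθdef
  set sθ := Real.sin (Real.pi * α / 2) with hsθdef
  have hcθ : 0 < cθ := by
    apply Real.cos_pos_of_mem_Ioo
    constructor
    · nlinarith [Real.pi_pos]
    · nlinarith [Real.pi_pos]
  have hRe : ∀ ω : ℝ, 0 < ω → (N ω).re = Ju + K * ω ^ (-α) * cθ := by
    intro ω hω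
    rw [hN ω hω]
    simp [Complex.div_re, Complex.normSq, -Complex.ofReal_cos, -Complex.ofReal_sin]
    try ring
  have hIm : ∀ ω : ℝ, 0 < ω → (N ω).im = -(η * ω)⁻¹ - K * ω ^ (-α) * sθ := by
    intro ω hω
    rw [hN ω hω]
    simp [Complex.div_im, Complex.normSq, -Complex.ofReal_cos, -Complex.ofReal_sin]
    ring
  set g := fun ω => ‖N ω‖ + (N ω).re with hgdef
  constructor
  · -- ω → 0⁺
    have hpow : Tendsto (fun ω : ℝ => ω ^ (-α)) (nhdsWithin 0 (Set.Ioi 0)) atTop := by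
      have h1 : Tendsto (fun x : ℝ => (x⁻¹) ^ α) (nhdsWithin 0 (Set.Ioi 0)) atTop :=
        (tendsto_rpow_atTop hα0).comp tendsto_inv_nhdsGT_zero
      refine h1.congr' ?_
      filter_upwards [self_mem_nhdsWithin] with ω (hω : 0 < ω)
      rw [Real.inv_rpow hω.le, ← Real.rpow_neg hω.le]
    have hg : Tendsto g (nhdsWithin 0 (Set.Ioi 0)) atTop := by
      have hlow : Tendsto (fun ω : ℝ => 2 * (Ju + K * ω ^ (-α) * cθ))
          (nhdsWithin 0 (Set.Ioi 0)) atTop := by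
        apply Tendsto.const_mul_atTop two_pos
        apply tendsto_atTop_add_const_left
        exact Tendsto.atTop_mul_const hcθ (hpow.const_mul_atTop hK)
      apply tendsto_atTop_mono' _ _ hlow
      filter_upwards [self_mem_nhdsWithin] with ω (hω : 0 < ω)
      have h1 := Complex.re_le_norm (N ω)
      have h2 := hRe ω hω
      simp only [hgdef]
      nlinarith
    have hf : Tendsto (fun ω => 2 / (ρ * g ω)) (nhdsWithin 0 (Set.Ioi 0)) (nhds 0) := by
      have : Tendsto (fun ω => ρ * g ω) (nhdsWithin 0 (Set.Ioi 0)) atTop :=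
        hg.const_mul_atTop hρ
      have h2 := (tendsto_inv_atTop_zero.comp this).const_mul 2
      rw [mul_zero] at h2
      exact h2.congr fun ω => (div_eq_mul_inv 2 (ρ * g ω)).symm
    have := (Real.continuous_sqrt.tendsto' 0 0 Real.sqrt_zero).comp hf
    refine this.congr' ?_
    filter_upwards [self_mem_nhdsWithin] with ω (hω : 0 < ω)
    simp [hc ω hω, Function.comp, hgdef]
  · -- ω → ∞
    have hpow : Tendsto (fun ω : ℝ => ω ^ (-α)) atTop (nhds 0) :=
      tendsto_rpow_neg_atTop hα0
    have hre : Tendsto (fun ω => (N ω).re) atTop (nhds Ju) := by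
      have : Tendsto (fun ω : ℝ => Ju + K * ω ^ (-α) * cθ) atTop (nhds (Ju + K * 0 * cθ)) :=
        tendsto_const_nhds.add ((hpow.const_mul K).mul_const cθ)
      simp only [mul_zero, zero_mul, add_zero] at this
      exact this.congr' (by filter_upwards [eventually_gt_atTop 0] with ω hω; exact (hRe ω hω).symm)
    have him : Tendsto (fun ω => (N ω).im) atTop (nhds 0) := by
      have h1 : Tendsto (fun ω : ℝ => -(η * ω)⁻¹ - K * ω ^ (-α) * sθ) atTop (nhds 0) := by
        have ha : Tendsto (fun ω : ℝ => (η * ω)⁻¹) atTop (nhds 0) := by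
          simpa using (tendsto_inv_atTop_zero.const_mul η⁻¹).congr
            fun ω => ((mul_inv η ω).symm : η⁻¹ * ω⁻¹ = (η * ω)⁻¹)
        have hb : Tendsto (fun ω : ℝ => K * ω ^ (-α) * sθ) atTop (nhds 0) := by
          simpa using (hpow.const_mul K).mul_const sθ
        simpa using ha.neg.sub hb
      exact h1.congr' (by filter_upwards [eventually_gt_atTop 0] with ω hω; exact (hIm ω hω).symm)
    have habs : Tendsto (fun ω => ‖N ω‖) atTop (nhds Ju) := by
      have h1 : Tendsto (fun ω => Real.sqrt ((N ω).re * (N ω).re + (N ω).im * (N ω).im))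
          atTop (nhds (Real.sqrt (Ju * Ju + 0 * 0))) :=
        (Real.continuous_sqrt.tendsto _).comp ((hre.mul hre).add (him.mul him))
      simp only [mul_zero, add_zero, Real.sqrt_mul_self hJ.le] at h1
      exact h1.congr fun ω => by rw [Complex.norm_def, Complex.normSq_apply]
    have hg : Tendsto g atTop (nhds (2 * Ju)) := by
      have := habs.add hre
      simpa [two_mul] using this
    have hf : Tendsto (fun ω => 2 / (ρ * g ω)) atTop (nhds (2 / (ρ * (2 * Ju)))) :=
      tendsto_const_nhds.div (hg.const_mul ρ) (by positivity)
    have hfin := (Real.continuous_sqrt.tendsto _).comp hf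
    have heq : Real.sqrt (2 / (ρ * (2 * Ju))) = 1 / Real.sqrt (ρ * Ju) := by
      rw [show 2 / (ρ * (2 * Ju)) = (ρ * Ju)⁻¹ by field_simp, Real.sqrt_inv, one_div]
    rw [heq] at hfin
    refine hfin.congr' ?_
    filter_upwards [eventually_gt_atTop 0] with ω hω
    simp [hc ω hω, Function.comp, hgdef]
end

section
/- Let ρ, J_u, η, A > 0 and 0 < α < 1, and for ω > 0 let N(ω) = J_u − i/(η ω) + A Γ(1+α) ω^{−α} (cos(πα/2) − i sin(πα/2)) be the Andrade complex compliance, and let ζ(ω) = ω √( ρ ( |N(ω)| − Re N(ω) ) / 2 ) be the attenuation. Then ζ(ω) → 0 as ω → 0⁺, and ζ(ω) → +∞ as ω → +∞. -/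
open Filter

set_option maxHeartbeats 1000000 in
theorem stmt_12 (ρ Ju η A α : ℝ) (hρ : 0 < ρ) (hJ : 0 < Ju) (hη : 0 < η) (hA : 0 < A)
    (hα0 : 0 < α) (hα1 : α < 1) (N : ℝ → ℂ) (ζ : ℝ → ℝ)
    (hN : ∀ ω : ℝ, 0 < ω → N ω =
      (Ju : ℂ) - Complex.I / ((η : ℂ) * (ω : ℂ))
        + ((A * Real.Gamma (1 + α) * ω ^ (-α) : ℝ) : ℂ)
          * ((Real.cos (Real.pi * α / 2) : ℂ) - Complex.I * (Real.sin (Real.pi * α / 2) : ℂ)))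
    (hζ : ∀ ω : ℝ, 0 < ω →
      ζ ω = ω * Real.sqrt (ρ * (‖N ω‖ - (N ω).re) / 2)) :
    Tendsto ζ (nhdsWithin 0 (Set.Ioi 0)) (nhds 0) ∧
    Tendsto ζ atTop atTop := by
  have hπ := Real.pi_pos
  have hΓ : 0 < Real.Gamma (1 + α) := Real.Gamma_pos_of_pos (by linarith)
  have hcos : 0 < Real.cos (Real.pi * α / 2) := by
    apply Real.cos_pos_of_mem_Ioo
    constructor <;> nlinarith
  have hsin : 0 < Real.sin (Real.pi * α / 2) := by
    apply Real.sin_pos_of_pos_of_lt_pi <;> nlinarith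
  set Cc : ℝ := A * Real.Gamma (1 + α) * Real.cos (Real.pi * α / 2) with hCc
  set Cs : ℝ := A * Real.Gamma (1 + α) * Real.sin (Real.pi * α / 2) with hCs
  have hCc0 : 0 < Cc := by positivity
  have hCs0 : 0 < Cs := by positivity
  have hre : ∀ ω : ℝ, 0 < ω → (N ω).re = Ju + Cc * ω ^ (-α) := by
    intro ω hω
    rw [hN ω hω]
    simp [-Complex.ofReal_cos, -Complex.ofReal_sin, Complex.div_re, Complex.normSq, mul_pow, hCc]
    ring
  have him : ∀ ω : ℝ, 0 < ω → (N ω).im = -(1/(η*ω) + Cs * ω ^ (-α)) := by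
    intro ω hω
    rw [hN ω hω]
    simp [-Complex.ofReal_cos, -Complex.ofReal_sin, Complex.div_im, Complex.normSq_mul,
      Complex.normSq_ofReal, hCs]
    field_simp
    ring
  have hrpow : ∀ ω : ℝ, 0 < ω → 0 < (ω:ℝ) ^ (-α) := fun ω hω => Real.rpow_pos_of_pos hω _
  have hre0 : ∀ ω : ℝ, 0 < ω → 0 < (N ω).re := by
    intro ω hω; rw [hre ω hω]
    have := hrpow ω hω; positivity
  have habs_re : ∀ ω : ℝ, 0 < ω → 0 ≤ ‖N ω‖ - (N ω).re := by
    intro ω hω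
    have := Complex.re_le_norm (N ω); linarith
  constructor
  · -- ω → 0⁺
    have key : ∀ ω : ℝ, 0 < ω →
        ζ ω ≤ Real.sqrt (ρ * (ω/η + Cs * ω ^ (2-α)) / 2) := by
      intro ω hω
      rw [hζ ω hω]
      rw [show ω * Real.sqrt (ρ * (‖N ω‖ - (N ω).re) / 2)
          = Real.sqrt (ω^2 * (ρ * (‖N ω‖ - (N ω).re) / 2)) by
        rw [Real.sqrt_mul (by positivity), Real.sqrt_sq hω.le]]
      apply Real.sqrt_le_sqrt
      have h1 : ‖N ω‖ - (N ω).re ≤ 1/(η*ω) + Cs * ω ^ (-α) := by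
        have h2 : ‖N ω‖ ≤ |(N ω).re| + |(N ω).im| :=
          Complex.norm_le_abs_re_add_abs_im (N ω)
        have h3 : |(N ω).re| = (N ω).re := abs_of_pos (hre0 ω hω)
        have h4 : |(N ω).im| = 1/(η*ω) + Cs * ω ^ (-α) := by
          rw [him ω hω, abs_neg, abs_of_pos]
          have := hrpow ω hω
          positivity
        linarith
      have e0 : ω^2 * ω ^ (-α) = ω ^ (2-α) := by
        rw [show (2-α : ℝ) = 2 + (-α) by ring, Real.rpow_add hω, Real.rpow_two]
      have e1 : ω^2 * (1/(η*ω)) = ω/η := by field_simp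
      have h5 : ω^2 * (1/(η*ω) + Cs * ω ^ (-α)) = ω/η + Cs * ω ^ (2-α) := by
        rw [mul_add, e1, show ω^2 * (Cs * ω ^ (-α)) = Cs * (ω^2 * ω ^ (-α)) by ring, e0]
      nlinarith [habs_re ω hω, sq_nonneg ω, mul_le_mul_of_nonneg_left h1 (sq_nonneg ω)]
    have hg : Tendsto (fun ω : ℝ => Real.sqrt (ρ * (ω/η + Cs * ω ^ (2-α)) / 2))
        (nhdsWithin 0 (Set.Ioi 0)) (nhds 0) := by
      have h1 : Tendsto (fun ω : ℝ => ρ * (ω/η + Cs * ω ^ (2-α)) / 2)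
          (nhds 0) (nhds 0) := by
        have hr : Tendsto (fun ω : ℝ => ω ^ (2-α)) (nhds 0) (nhds 0) := by
          have := (Real.continuousAt_rpow_const 0 (2-α) (Or.inr (by linarith)))
          have h0 : (0:ℝ) ^ (2-α) = 0 := Real.zero_rpow (by linarith)
          simpa [ContinuousAt, h0] using this
        have := ((tendsto_id.div_const η).add (hr.const_mul Cs)).const_mul ρ |>.div_const 2
        simpa using this
      have h2 := h1.sqrt
      rw [Real.sqrt_zero] at h2
      exact h2.mono_left nhdsWithin_le_nhds
    apply tendsto_of_tendsto_of_tendsto_of_le_of_le' tendsto_const_nhds hg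
    · filter_upwards [self_mem_nhdsWithin] with ω hω
      have hω' : (0:ℝ) < ω := hω
      rw [hζ ω hω']
      positivity
    · filter_upwards [self_mem_nhdsWithin] with ω hω
      exact key ω hω
  · -- ω → ∞
    set M : ℝ := 2*(Ju+Cc) + 1/η + Cs with hM
    have hM0 : 0 < M := by positivity
    set c : ℝ := Cs * Real.sqrt (ρ/(2*M)) with hc
    have hsq : 0 < Real.sqrt (ρ/(2*M)) := Real.sqrt_pos.mpr (by positivity)
    have hc0 : 0 < c := mul_pos hCs0 hsq
    have key : ∀ ω : ℝ, 1 ≤ ω → c * ω ^ (1-α) ≤ ζ ω := by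
      intro ω hω1
      have hω : 0 < ω := lt_of_lt_of_le one_pos hω1
      have hωα : ω ^ (-α) ≤ 1 := by
        apply Real.rpow_le_one_of_one_le_of_nonpos hω1 (by linarith)
      have hbound : ‖N ω‖ + (N ω).re ≤ M := by
        have h2 : ‖N ω‖ ≤ |(N ω).re| + |(N ω).im| :=
          Complex.norm_le_abs_re_add_abs_im (N ω)
        have h3 : |(N ω).re| = (N ω).re := abs_of_pos (hre0 ω hω)
        have h4 : |(N ω).im| = 1/(η*ω) + Cs * ω ^ (-α) := by
          rw [him ω hω, abs_neg, abs_of_pos]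
          have := hrpow ω hω
          positivity
        have h5 : (N ω).re ≤ Ju + Cc := by
          rw [hre ω hω]
          nlinarith [hCc0.le, hωα]
        have h6 : 1/(η*ω) ≤ 1/η := by
          apply one_div_le_one_div_of_le hη
          nlinarith
        have h7 : Cs * ω ^ (-α) ≤ Cs := by nlinarith [hCs0.le, hωα]
        rw [hM]; linarith
      have him2 : ((N ω).im)^2 ≥ (Cs * ω ^ (-α))^2 := by
        rw [him ω hω]
        have h0 : 0 < 1/(η*ω) := by positivity
        have h1 : 0 < Cs * ω ^ (-α) := mul_pos hCs0 (hrpow ω hω)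
        nlinarith [mul_pos h0 h1, sq_nonneg (1/(η*ω))]
      have hdiff : ‖N ω‖ - (N ω).re ≥ (Cs * ω ^ (-α))^2 / M := by
        have hid : (‖N ω‖ - (N ω).re) * (‖N ω‖ + (N ω).re)
            = ((N ω).im)^2 := by
          have := Complex.sq_norm (N ω)
          rw [Complex.normSq_apply] at this
          nlinarith
        have hpos : 0 < ‖N ω‖ + (N ω).re := by
          have := norm_nonneg (N ω)
          have := hre0 ω hω; linarith
        rw [ge_iff_le, div_le_iff₀ hM0]
        calc (Cs * ω ^ (-α))^2 ≤ ((N ω).im)^2 := him2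
          _ = (‖N ω‖ - (N ω).re) * (‖N ω‖ + (N ω).re) := hid.symm
          _ ≤ (‖N ω‖ - (N ω).re) * M :=
            mul_le_mul_of_nonneg_left hbound (habs_re ω hω)
      rw [hζ ω hω]
      have hstep : Real.sqrt (ρ * ((Cs * ω ^ (-α))^2 / M) / 2)
          ≤ Real.sqrt (ρ * (‖N ω‖ - (N ω).re) / 2) := by
        apply Real.sqrt_le_sqrt
        have : (Cs * ω ^ (-α))^2 / M ≤ ‖N ω‖ - (N ω).re := hdiff
        nlinarith
      have heq : Real.sqrt (ρ * ((Cs * ω ^ (-α))^2 / M) / 2)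
          = Real.sqrt (ρ/(2*M)) * (Cs * ω ^ (-α)) := by
        rw [show ρ * ((Cs * ω ^ (-α))^2 / M) / 2 = (ρ/(2*M)) * (Cs * ω ^ (-α))^2 by
          field_simp]
        rw [Real.sqrt_mul (by positivity), Real.sqrt_sq (by have := hrpow ω hω; positivity)]
      have hfin : c * ω ^ (1-α) = ω * (Real.sqrt (ρ/(2*M)) * (Cs * ω ^ (-α))) := by
        rw [hc]
        have : ω ^ (1-α) = ω * ω ^ (-α) := by
          rw [show (1-α:ℝ) = 1 + (-α) by ring, Real.rpow_add hω, Real.rpow_one]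
        rw [this]; ring
      rw [hfin, ← heq]
      exact mul_le_mul_of_nonneg_left hstep hω.le
    have hmono : Tendsto (fun ω : ℝ => c * ω ^ (1-α)) atTop atTop := by
      exact (tendsto_rpow_atTop (by linarith)).const_mul_atTop hc0
    apply tendsto_atTop_mono' _ _ hmono
    filter_upwards [eventually_ge_atTop (1:ℝ)] with ω hω
    exact key ω hω
end

section
/- Let ρ, J_u, η, A > 0 and 0 < α < 1, and for ω > 0 let N(ω) = J_u − i/(η ω) + A Γ(1+α) ω^{−α} (cos(πα/2) − i sin(πα/2)) be the Andrade complex compliance, and let ζ(ω) = ω √( ρ ( |N(ω)| − Re N(ω) ) / 2 ) be the attenuation. Then the attenuation is sublinear at high frequency: ζ(ω)/ω → 0 as ω → +∞, i.e. ζ(ω) = o(ω) as ω → +∞. -/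
open Filter

theorem stmt_13 (ρ Ju η A α : ℝ) (hρ : 0 < ρ) (hJ : 0 < Ju) (hη : 0 < η) (hA : 0 < A)
    (hα0 : 0 < α) (hα1 : α < 1) (N : ℝ → ℂ) (ζ : ℝ → ℝ)
    (hN : ∀ ω : ℝ, 0 < ω → N ω =
      (Ju : ℂ) - Complex.I / ((η : ℂ) * (ω : ℂ))
        + ((A * Real.Gamma (1 + α) * ω ^ (-α) : ℝ) : ℂ)
          * ((Real.cos (Real.pi * α / 2) : ℂ) - Complex.I * (Real.sin (Real.pi * α / 2) : ℂ)))
    (hζ : ∀ ω : ℝ, 0 < ω →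
      ζ ω = ω * Real.sqrt (ρ * (‖N ω‖ - (N ω).re) / 2)) :
    Tendsto (fun ω => ζ ω / ω) atTop (nhds 0) := by
  -- Step 1: N tends to Ju
  have hinv : Tendsto (fun ω : ℝ => ((ω : ℂ))⁻¹) atTop (nhds 0) := by
    have : Tendsto (fun ω : ℝ => ((ω⁻¹ : ℝ) : ℂ)) atTop (nhds ((0 : ℝ) : ℂ)) :=
      (Complex.continuous_ofReal.tendsto _).comp tendsto_inv_atTop_zero
    simpa using this
  have h1 : Tendsto (fun ω : ℝ => Complex.I / ((η : ℂ) * (ω : ℂ))) atTop (nhds 0) := by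
    have : Tendsto (fun ω : ℝ => Complex.I * (η : ℂ)⁻¹ * ((ω : ℂ))⁻¹) atTop
        (nhds (Complex.I * (η : ℂ)⁻¹ * 0)) := (tendsto_const_nhds).mul hinv
    simp only [mul_zero] at this
    refine this.congr fun ω => ?_
    field_simp
  have hrpow : Tendsto (fun ω : ℝ => A * Real.Gamma (1 + α) * ω ^ (-α)) atTop (nhds 0) := by
    have := (tendsto_rpow_neg_atTop hα0).const_mul (A * Real.Gamma (1 + α))
    simpa using this
  have h2 : Tendsto (fun ω : ℝ => ((A * Real.Gamma (1 + α) * ω ^ (-α) : ℝ) : ℂ)) atTop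
      (nhds 0) := by
    have := (Complex.continuous_ofReal.tendsto _).comp hrpow
    simpa only [Function.comp_def, Complex.ofReal_zero] using this
  have hNlim : Tendsto N atTop (nhds (Ju : ℂ)) := by
    have hg : Tendsto (fun ω : ℝ =>
        (Ju : ℂ) - Complex.I / ((η : ℂ) * (ω : ℂ))
          + ((A * Real.Gamma (1 + α) * ω ^ (-α) : ℝ) : ℂ)
            * ((Real.cos (Real.pi * α / 2) : ℂ) - Complex.I * (Real.sin (Real.pi * α / 2) : ℂ)))
        atTop (nhds ((Ju : ℂ) - 0 + 0 * ((Real.cos (Real.pi * α / 2) : ℂ)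
          - Complex.I * (Real.sin (Real.pi * α / 2) : ℂ)))) :=
      ((tendsto_const_nhds.sub h1).add (h2.mul tendsto_const_nhds))
    simp only [sub_zero, zero_mul, add_zero] at hg
    refine hg.congr' ?_
    filter_upwards [eventually_gt_atTop (0 : ℝ)] with ω hω
    exact (hN ω hω).symm
  -- Step 2: |N| - Re N → 0
  have habs : Tendsto (fun ω => ‖N ω‖) atTop (nhds Ju) := by
    have := (continuous_norm.tendsto _).comp hNlim
    simpa [Function.comp_def, abs_of_pos hJ] using this
  have hre : Tendsto (fun ω => (N ω).re) atTop (nhds Ju) := by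
    have := (Complex.continuous_re.tendsto _).comp hNlim
    simpa [Function.comp_def] using this
  have hf : Tendsto (fun ω => ρ * (‖N ω‖ - (N ω).re) / 2) atTop (nhds 0) := by
    have := ((habs.sub hre).const_mul ρ).div_const 2
    simpa using this
  have hsqrt : Tendsto (fun ω => Real.sqrt (ρ * (‖N ω‖ - (N ω).re) / 2)) atTop
      (nhds 0) := by
    have := (Real.continuous_sqrt.tendsto 0).comp hf
    simpa only [Function.comp_def, Real.sqrt_zero] using this
  refine hsqrt.congr' ?_
  filter_upwards [eventually_gt_atTop (0 : ℝ)] with ω hω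
  rw [hζ ω hω, mul_comm ω]; exact (mul_div_cancel_right₀ _ hω.ne').symm
end

section
/- Let ρ, J_u, η, A > 0, 0 < α < 1, L ≥ 1, and θ_ℓ > 0, μ_ℓ > 0 for ℓ = 1, …, L. For ω > 0 define the Andrade–DA complex compliance Ñ(ω) = J_u − i/(η ω) + A Γ(1+α) (2 sin(πα)/π) ∑_{ℓ=1}^L μ_ℓ θ_ℓ^{1−2α} / (θ_ℓ² + iω), and the phase velocity c̃(ω) = √( 2 / ( ρ ( |Ñ(ω)| + Re Ñ(ω) ) ) ). Then c̃(ω) → 0 as ω → 0⁺ and c̃(ω) → 1/√(ρ J_u) as ω → +∞; in particular the low- and high-frequency phase velocity limits of the Andrade–DA model coincide with those of the original Andrade model. -/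
open Filter

theorem stmt_16 (ρ Ju η A α : ℝ) (hρ : 0 < ρ) (hJ : 0 < Ju) (hη : 0 < η) (hA : 0 < A)
    (hα0 : 0 < α) (hα1 : α < 1) (L : ℕ) (hL : 1 ≤ L)
    (θ μ : Fin L → ℝ) (hθ : ∀ ℓ, 0 < θ ℓ) (hμ : ∀ ℓ, 0 < μ ℓ)
    (N : ℝ → ℂ) (c : ℝ → ℝ)
    (hN : ∀ ω : ℝ, 0 < ω → N ω =
      (Ju : ℂ) - Complex.I / ((η : ℂ) * (ω : ℂ))
        + ((A * Real.Gamma (1 + α) * (2 * Real.sin (Real.pi * α) / Real.pi) : ℝ) : ℂ)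
          * ∑ ℓ : Fin L, ((μ ℓ * θ ℓ ^ (1 - 2 * α) : ℝ) : ℂ)
              / (((θ ℓ ^ 2 : ℝ) : ℂ) + Complex.I * (ω : ℂ)))
    (hc : ∀ ω : ℝ, 0 < ω →
      c ω = Real.sqrt (2 / (ρ * (‖N ω‖ + (N ω).re)))) :
    Tendsto c (nhdsWithin 0 (Set.Ioi 0)) (nhds 0) ∧
    Tendsto c atTop (nhds (1 / Real.sqrt (ρ * Ju))) := by
  set K : ℝ := A * Real.Gamma (1 + α) * (2 * Real.sin (Real.pi * α) / Real.pi) with hK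
  set M : ℝ → ℂ := fun ω => (Ju : ℂ) + (K : ℂ) *
      ∑ ℓ : Fin L, ((μ ℓ * θ ℓ ^ (1 - 2 * α) : ℝ) : ℂ)
        / (((θ ℓ ^ 2 : ℝ) : ℂ) + Complex.I * (ω : ℂ)) with hM
  have hden : ∀ (ℓ : Fin L) (ω : ℝ), (((θ ℓ ^ 2 : ℝ) : ℂ) + Complex.I * (ω : ℂ)) ≠ 0 := by
    intro ℓ ω h
    have h2 := congrArg Complex.re h
    simp only [Complex.add_re, Complex.ofReal_re, Complex.mul_re, Complex.I_re, Complex.I_im,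
      Complex.ofReal_im, Complex.zero_re, zero_mul, one_mul, mul_zero, sub_zero, zero_sub,
      add_zero] at h2
    nlinarith [pow_pos (hθ ℓ) 2]
  have hNM : ∀ ω : ℝ, 0 < ω → N ω = M ω - (((η * ω)⁻¹ : ℝ) : ℂ) * Complex.I := by
    intro ω hω
    rw [hN ω hω, hM]
    push_cast
    rw [div_eq_mul_inv, mul_inv]
    ring
  have hNre : ∀ ω : ℝ, 0 < ω → (N ω).re = (M ω).re := by
    intro ω hω
    rw [hNM ω hω]
    simp
  have hNim : ∀ ω : ℝ, 0 < ω → (N ω).im = (M ω).im - (η * ω)⁻¹ := by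
    intro ω hω
    rw [hNM ω hω]
    simp
  have hMcont : Continuous M := by
    apply continuous_const.add
    apply continuous_const.mul
    apply continuous_finset_sum
    intro ℓ _
    exact continuous_const.div
      (continuous_const.add (continuous_const.mul Complex.continuous_ofReal))
      (fun ω => hden ℓ ω)
  constructor
  · -- low frequency
    have hMten : Tendsto M (nhdsWithin 0 (Set.Ioi 0)) (nhds (M 0)) :=
      (hMcont.tendsto 0).mono_left nhdsWithin_le_nhds
    have hMabs : Tendsto (fun ω => ‖M ω‖) (nhdsWithin 0 (Set.Ioi 0))
        (nhds (‖M 0‖)) := (continuous_norm.tendsto _).comp hMten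
    set C : ℝ := ‖M 0‖ + 1 with hC
    have hMbd : ∀ᶠ ω in nhdsWithin 0 (Set.Ioi 0), ‖M ω‖ ≤ C := by
      filter_upwards [hMabs.eventually (eventually_le_nhds (by simp [hC] : ‖M 0‖ < C))]
        with ω h using h
    have hinv : Tendsto (fun ω : ℝ => (η * ω)⁻¹ - 2 * C) (nhdsWithin 0 (Set.Ioi 0)) atTop := by
      apply tendsto_atTop_add_const_right
      apply tendsto_inv_nhdsGT_zero.comp
      rw [tendsto_nhdsWithin_iff]
      constructor
      · have h : Tendsto (fun ω : ℝ => η * ω) (nhds 0) (nhds (η * 0)) :=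
          (continuous_const.mul continuous_id).tendsto 0
        rw [mul_zero] at h
        exact h.mono_left nhdsWithin_le_nhds
      · filter_upwards [self_mem_nhdsWithin] with ω hω
        exact mul_pos hη hω
    have hg : Tendsto (fun ω => ‖N ω‖ + (N ω).re) (nhdsWithin 0 (Set.Ioi 0)) atTop := by
      apply tendsto_atTop_mono' _ _ hinv
      filter_upwards [hMbd, self_mem_nhdsWithin] with ω hCω hω
      have hω' : (0:ℝ) < ω := hω
      have hreM : -C ≤ (N ω).re := by
        rw [hNre ω hω']
        exact neg_le_of_abs_le ((Complex.abs_re_le_norm (M ω)).trans hCω)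
      have habs : (η * ω)⁻¹ - C ≤ ‖N ω‖ := by
        have h2 : |(M ω).im| ≤ C := (Complex.abs_im_le_norm _).trans hCω
        have h1 : (η * ω)⁻¹ - C ≤ |(N ω).im| := by
          rw [hNim ω hω']
          calc (η * ω)⁻¹ - C ≤ (η * ω)⁻¹ - (M ω).im := by
                linarith [le_abs_self (M ω).im]
            _ = -((M ω).im - (η * ω)⁻¹) := by ring
            _ ≤ |(M ω).im - (η * ω)⁻¹| := neg_le_abs _
        exact h1.trans (Complex.abs_im_le_norm _)
      linarith
    have h1 : Tendsto (fun ω => ρ * (‖N ω‖ + (N ω).re))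
        (nhdsWithin 0 (Set.Ioi 0)) atTop := hg.const_mul_atTop hρ
    have h2 : Tendsto (fun ω => 2 / (ρ * (‖N ω‖ + (N ω).re)))
        (nhdsWithin 0 (Set.Ioi 0)) (nhds 0) := tendsto_const_nhds.div_atTop h1
    have h3 := (Real.continuous_sqrt.tendsto 0).comp h2
    rw [Real.sqrt_zero] at h3
    apply h3.congr'
    filter_upwards [self_mem_nhdsWithin] with ω hω
    exact (hc ω hω).symm
  · -- high frequency
    have hsmall : Tendsto (fun ω : ℝ => (((η * ω)⁻¹ : ℝ) : ℂ) * Complex.I) atTop (nhds 0) := by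
      have h1 : Tendsto (fun ω : ℝ => (η * ω)⁻¹) atTop (nhds 0) :=
        tendsto_inv_atTop_zero.comp (tendsto_id.const_mul_atTop hη)
      have h2 := (Complex.continuous_ofReal.tendsto 0).comp h1
      have h3 := h2.mul_const Complex.I
      simpa using h3
    have hMten : Tendsto M atTop (nhds ((Ju : ℂ) + (K : ℂ) * 0)) := by
      apply tendsto_const_nhds.add
      apply tendsto_const_nhds.mul
      have hsum : Tendsto (fun ω : ℝ => ∑ ℓ : Fin L, ((μ ℓ * θ ℓ ^ (1 - 2 * α) : ℝ) : ℂ)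
          / (((θ ℓ ^ 2 : ℝ) : ℂ) + Complex.I * (ω : ℂ))) atTop (nhds (∑ ℓ : Fin L, 0)) := by
        apply tendsto_finset_sum
        intro ℓ _
        rw [tendsto_zero_iff_norm_tendsto_zero]
        refine squeeze_zero' (g := fun ω : ℝ => ‖((μ ℓ * θ ℓ ^ (1 - 2 * α) : ℝ) : ℂ)‖ / ω)
          (Eventually.of_forall fun ω => norm_nonneg _) ?_ ?_
        · filter_upwards [eventually_gt_atTop (0:ℝ)] with ω hω
          rw [norm_div]
          have hd : ω ≤ ‖(((θ ℓ ^ 2 : ℝ) : ℂ) + Complex.I * (ω : ℂ))‖ := by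
            have him : ((((θ ℓ ^ 2 : ℝ) : ℂ) + Complex.I * (ω : ℂ))).im = ω := by
              simp only [Complex.add_im, Complex.ofReal_im, Complex.mul_im, Complex.I_re,
                Complex.I_im, Complex.ofReal_re, zero_mul, one_mul, zero_add, mul_zero, add_zero]
            have h4 := Complex.abs_im_le_norm (((θ ℓ ^ 2 : ℝ) : ℂ) + Complex.I * (ω : ℂ))
            rw [him] at h4
            exact (le_abs_self ω).trans h4
          gcongr
        · exact tendsto_const_nhds.div_atTop tendsto_id
      simpa using hsum
    have hNten : Tendsto N atTop (nhds (Ju : ℂ)) := by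
      have h : Tendsto (fun ω => M ω - (((η * ω)⁻¹ : ℝ) : ℂ) * Complex.I) atTop
          (nhds (((Ju : ℂ) + (K : ℂ) * 0) - 0)) := hMten.sub hsmall
      simp only [mul_zero, add_zero, sub_zero] at h
      apply h.congr'
      filter_upwards [eventually_gt_atTop (0:ℝ)] with ω hω
      exact (hNM ω hω).symm
    have hgten : Tendsto (fun ω => ‖N ω‖ + (N ω).re) atTop (nhds (Ju + Ju)) := by
      have h1 : Tendsto (fun ω => ‖N ω‖) atTop (nhds (‖(Ju : ℂ)‖)) :=
        (continuous_norm.tendsto _).comp hNten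
      have h2 : Tendsto (fun ω => (N ω).re) atTop (nhds ((Ju : ℂ).re)) :=
        (Complex.continuous_re.tendsto _).comp hNten
      have h3 := h1.add h2
      simpa [Complex.norm_of_nonneg hJ.le, abs_of_pos hJ] using h3
    have hne : ρ * (Ju + Ju) ≠ 0 := by positivity
    have hdiv : Tendsto (fun ω => 2 / (ρ * (‖N ω‖ + (N ω).re))) atTop
        (nhds (2 / (ρ * (Ju + Ju)))) := tendsto_const_nhds.div (hgten.const_mul ρ) hne
    have hfin := (Real.continuous_sqrt.tendsto _).comp hdiv
    have hval : Real.sqrt (2 / (ρ * (Ju + Ju))) = 1 / Real.sqrt (ρ * Ju) := by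
      rw [show 2 / (ρ * (Ju + Ju)) = (ρ * Ju)⁻¹ by field_simp; ring]
      rw [Real.sqrt_inv, one_div]
    rw [hval] at hfin
    apply hfin.congr'
    filter_upwards [eventually_gt_atTop (0:ℝ)] with ω hω
    exact (hc ω hω).symm
end
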